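/- arXiv:1210.4325 — 5 statements merged into one kernel-verified Lean document; each statement's English description precedes it below -/
import Mathlib

section
/- Let f = e^{-φ}: ℝⁿ → [0,∞) be a log-concave function which is compactly supported, bounded, and satisfies f(0) > 0. Then M*(f) = M̃*(f): the limit c_n · lim_{ε→0⁺} ( ∫ (G ⋆ (ε·f)) − ∫ G ) / ε exists and equals (2/n) ∫_{ℝⁿ} (Lφ)(x) dγ_n(x). -/
open MeasureTheory Filter Topology Real
open scoped ENNReal NNReal RealInnerProductSpace

noncomputable section

abbrev Euc (n : ℕ) := EuclideanSpace ℝ (Fin n)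

/-- `f` is a log-concave function: nonnegative, not identically zero,
upper semi-continuous, and `f((1-t)x + ty) ≥ f(x)^(1-t) · f(y)^t`. -/
def IsLogConcave {n : ℕ} (f : Euc n → ℝ) : Prop :=
  (∀ x, 0 ≤ f x) ∧ (∃ x, f x ≠ 0) ∧ UpperSemicontinuous f ∧
    ∀ x y : Euc n, ∀ t : ℝ, 0 ≤ t → t ≤ 1 →
      f x ^ (1 - t) * f y ^ t ≤ f ((1 - t) • x + t • y)

/-- `φ = -log f`, i.e. `f = e^{-φ}`, with `φ x = ⊤` exactly where `f x = 0`. -/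
def IsNegLogOf {n : ℕ} (φ : Euc n → EReal) (f : Euc n → ℝ) : Prop :=
  ∀ x, (0 < f x → φ x = ((- Real.log (f x) : ℝ) : EReal)) ∧ (f x = 0 → φ x = ⊤)

/-- The Legendre transform of an `EReal`-valued function:
`(Lφ)(x) = sup_y (⟨x,y⟩ - φ(y))`. -/
def legendre {n : ℕ} (φ : Euc n → EReal) (x : Euc n) : EReal :=
  ⨆ y : Euc n, ((inner ℝ x y : ℝ) : EReal) - φ y

/-- The standard gaussian probability measure `γₙ` on `ℝⁿ`,
with density `(2π)^(-n/2) e^{-|x|²/2}` w.r.t. Lebesgue measure. -/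
def gaussianMeasure (n : ℕ) : Measure (Euc n) :=
  volume.withDensity fun x =>
    ENNReal.ofReal ((2 * π) ^ (-(n : ℝ) / 2) * Real.exp (-‖x‖ ^ 2 / 2))

/-- The nonnegative part of an extended real number, as `ℝ≥0∞`. -/
def erealToENNReal (x : EReal) : ℝ≥0∞ :=
  if x = ⊤ then ⊤ else ENNReal.ofReal x.toReal

/-- Extended-real-valued integral: positive part minus negative part. -/
def eIntegral {α : Type*} [MeasurableSpace α] (μ : Measure α) (h : α → EReal) : EReal :=
  ((∫⁻ a, erealToENNReal (h a) ∂μ : ℝ≥0∞) : EReal) -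
    ((∫⁻ a, erealToENNReal (-h a) ∂μ : ℝ≥0∞) : EReal)

/-- The mean width `M*(f) = (2/n) ∫ (Lφ) dγₙ` of `f = e^{-φ}`. -/
def meanWidth (n : ℕ) (φ : Euc n → EReal) : EReal :=
  ((2 / n : ℝ) : EReal) * eIntegral (gaussianMeasure n) (legendre φ)

/-- The Asplund product (sup-convolution): `(f ⋆ g)(x) = sup_{x₁+x₂=x} f(x₁)g(x₂)`. -/
def asplund {n : ℕ} (f g : Euc n → ℝ) (x : Euc n) : ℝ :=
  ⨆ y : Euc n, f y * g (x - y)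

/-- Homothety of a log-concave function: `(λ·f)(x) = f(x/λ)^λ`. -/
def homoth {n : ℕ} (l : ℝ) (f : Euc n → ℝ) (x : Euc n) : ℝ :=
  f (l⁻¹ • x) ^ l

/-- The gaussian `G(x) = e^{-|x|²/2}`. -/
def gaussG {n : ℕ} (x : Euc n) : ℝ := Real.exp (-‖x‖ ^ 2 / 2)

/-- `∫ G ⋆ (ε·f)` over `ℝⁿ`. -/
def asplundIntegral (n : ℕ) (f : Euc n → ℝ) (ε : ℝ) : ℝ≥0∞ :=
  ∫⁻ x : Euc n, ENNReal.ofReal (asplund gaussG (homoth ε f) x)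

/-- `∫ G` over `ℝⁿ`. -/
def gaussInt (n : ℕ) : ℝ≥0∞ := ∫⁻ x : Euc n, ENNReal.ofReal (gaussG x)

/-- The normalization constant `cₙ = 2/(n(2π)^(n/2))`. -/
def cconst (n : ℕ) : ℝ := 2 / (n * (2 * π) ^ ((n : ℝ) / 2))

/-- Relative volume ratio `V(f) = (∫f / ∫G)^(1/n)` of `f ≥ G`. -/
def volRatio (n : ℕ) (f : Euc n → ℝ) : ℝ :=
  ((∫⁻ x : Euc n, ENNReal.ofReal (f x)).toReal) ^ (1 / (n : ℝ)) / Real.sqrt (2 * π)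

open scoped Pointwise

set_option linter.unusedSectionVars false
set_option linter.unusedVariables false

/-- term function -/
def tfun {n : ℕ} (f : Euc n → ℝ) (ε : ℝ) (x z : Euc n) : ℝ :=
  ⟪x, z⟫ + Real.log (f z) - ε * (‖z‖ ^ 2 / 2)

/-- the approximating Legendre transform -/
def psf {n : ℕ} (f : Euc n → ℝ) (ε : ℝ) (x : Euc n) : ℝ :=
  ⨆ z : {z : Euc n // 0 < f z}, tfun f ε x z.1


lemma abs_exp_sub_one_le' (t : ℝ) : |Real.exp t - 1| ≤ |t| * Real.exp |t| := by
  rcases le_or_gt 0 t with ht | ht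
  · rw [abs_of_nonneg ht, abs_of_nonneg (by simpa using Real.one_le_exp ht)]
    have h1 : 1 - t ≤ Real.exp (-t) := by linarith [Real.add_one_le_exp (-t)]
    have h2 := mul_le_mul_of_nonneg_left h1 (Real.exp_pos t).le
    rw [mul_sub, ← Real.exp_add] at h2
    simp only [add_neg_cancel, Real.exp_zero, mul_one] at h2
    linarith
  · have he : Real.exp t ≤ 1 := by
      rw [← Real.exp_zero]; exact Real.exp_le_exp.2 ht.le
    rw [abs_of_neg ht, abs_of_nonpos (by linarith)]
    have h1 : 1 + t ≤ Real.exp t := by linarith [Real.add_one_le_exp t]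
    have h3 : (1:ℝ) ≤ Real.exp (-t) := Real.one_le_exp (by linarith)
    nlinarith

lemma integrable_gauss_euc (n : ℕ) {b : ℝ} (hb : 0 < b) :
    Integrable (fun v : Euc n => Real.exp (-b * ‖v‖ ^ 2)) := by
  have h := (GaussianFourier.integrable_cexp_neg_mul_sq_norm_add (V := Euc n)
      (b := (b : ℂ)) (by simpa using hb) 0 0).norm
  convert h using 2 with v
  rw [Complex.norm_exp]
  norm_num
  left
  norm_cast

lemma integrable_of_le_gaussian (n : ℕ) (h : Euc n → ℝ) (hm : AEStronglyMeasurable h volume)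
    (a C : ℝ) (hb : ∀ x, |h x| ≤ Real.exp (a * ‖x‖ + C - ‖x‖ ^ 2 / 2)) :
    Integrable h (volume : Measure (Euc n)) := by
  have hi : Integrable (fun v : Euc n => Real.exp (C + a ^ 2) * Real.exp (-(1/4) * ‖v‖ ^ 2)) :=
    (integrable_gauss_euc n (by norm_num : (0:ℝ) < 1/4)).const_mul _
  refine hi.mono hm (Filter.Eventually.of_forall fun x => ?_)
  have h2 : a * ‖x‖ + C - ‖x‖ ^ 2 / 2 ≤ (C + a ^ 2) + (-(1/4) * ‖x‖ ^ 2) := by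
    nlinarith [sq_nonneg (a - ‖x‖ / 2), norm_nonneg x]
  calc ‖h x‖ = |h x| := rfl
    _ ≤ Real.exp (a * ‖x‖ + C - ‖x‖ ^ 2 / 2) := hb x
    _ ≤ ‖Real.exp (C + a ^ 2) * Real.exp (-(1/4) * ‖x‖ ^ 2)‖ := by
        rw [← Real.exp_add] at *
        rw [Real.norm_eq_abs, abs_of_pos (Real.exp_pos _)]
        exact Real.exp_le_exp.2 h2


lemma ereal_coe_ciSup {ι : Type*} [Nonempty ι] (g : ι → ℝ) (hg : BddAbove (Set.range g)) :
    ((⨆ i, g i : ℝ) : EReal) = ⨆ i, (g i : EReal) :=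
  Monotone.map_ciSup_of_continuousAt (continuous_coe_real_ereal.continuousAt)
    (fun _ _ h => EReal.coe_le_coe_iff.2 h) hg


lemma ennreal_ereal_coe_toReal {A : ℝ≥0∞} (hA : A ≠ ⊤) : (A : EReal) = ((A.toReal : ℝ) : EReal) := by
  conv_lhs => rw [← ENNReal.ofReal_toReal hA]
  rw [EReal.coe_ennreal_ofReal, max_eq_left ENNReal.toReal_nonneg]

lemma eIntegral_coe {α : Type*} [MeasurableSpace α] (μ : Measure α) (g : α → ℝ)
    (hg : Integrable g μ) :
    eIntegral μ (fun a => ((g a : ℝ) : EReal)) = ((∫ a, g a ∂μ : ℝ) : EReal) := by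
  have h1 : ∀ a, erealToENNReal ((g a : ℝ) : EReal) = ENNReal.ofReal (g a) := by
    intro a
    rw [erealToENNReal, if_neg (EReal.coe_ne_top _), EReal.toReal_coe]
  have h2 : ∀ a, erealToENNReal (-((g a : ℝ) : EReal)) = ENNReal.ofReal (-g a) := by
    intro a
    rw [← EReal.coe_neg, erealToENNReal, if_neg (EReal.coe_ne_top _), EReal.toReal_coe]
  unfold eIntegral
  simp_rw [h1, h2]
  have hA : (∫⁻ a, ENNReal.ofReal (g a) ∂μ) ≠ ⊤ := by
    refine ne_of_lt (lt_of_le_of_lt (lintegral_mono fun a => ?_) hg.2)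
    rw [← ofReal_norm, Real.norm_eq_abs]
    exact ENNReal.ofReal_le_ofReal (le_abs_self _)
  have hB : (∫⁻ a, ENNReal.ofReal (-g a) ∂μ) ≠ ⊤ := by
    refine ne_of_lt (lt_of_le_of_lt (lintegral_mono fun a => ?_) hg.2)
    rw [← ofReal_norm, Real.norm_eq_abs]
    exact ENNReal.ofReal_le_ofReal (neg_le_abs _)
  rw [integral_eq_lintegral_pos_part_sub_lintegral_neg_part hg,
    ennreal_ereal_coe_toReal hA, ennreal_ereal_coe_toReal hB, ← EReal.coe_sub]

section Main

variable {n : ℕ} {f : Euc n → ℝ} {R CM : ℝ}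

lemma psf_nonempty (h0 : 0 < f 0) : Nonempty {z : Euc n // 0 < f z} := ⟨⟨0, h0⟩⟩

variable (hR : ∀ z, 0 < f z → ‖z‖ ≤ R) (hCM : ∀ z, 0 < f z → Real.log (f z) ≤ CM)
variable (h0 : 0 < f 0) (hR0 : 0 ≤ R)

set_option linter.unusedVariables false

include hR hCM h0 hR0

lemma tfun_le {ε : ℝ} (hε : 0 ≤ ε) (x : Euc n) {z : Euc n} (hz : 0 < f z) :
    tfun f ε x z ≤ R * ‖x‖ + CM := by
  have h1 : ⟪x, z⟫ ≤ R * ‖x‖ := by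
    calc ⟪x, z⟫ ≤ ‖x‖ * ‖z‖ := real_inner_le_norm x z
      _ ≤ ‖x‖ * R := by
          exact mul_le_mul_of_nonneg_left (hR z hz) (norm_nonneg x)
      _ = R * ‖x‖ := mul_comm _ _
  have h2 : Real.log (f z) ≤ CM := hCM z hz
  have h3 : 0 ≤ ε * (‖z‖ ^ 2 / 2) := by positivity
  unfold tfun; linarith

lemma bddAbove_tfun {ε : ℝ} (hε : 0 ≤ ε) (x : Euc n) :
    BddAbove (Set.range fun z : {z : Euc n // 0 < f z} => tfun f ε x z.1) := by
  refine ⟨R * ‖x‖ + CM, ?_⟩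
  rintro r ⟨z, rfl⟩
  exact tfun_le hR hCM h0 hR0 hε x z.2

lemma psf_le {ε : ℝ} (hε : 0 ≤ ε) (x : Euc n) : psf f ε x ≤ R * ‖x‖ + CM := by
  have := psf_nonempty (f := f) h0
  exact ciSup_le fun z => tfun_le hR hCM h0 hR0 hε x z.2

lemma tfun_zero_right (ε : ℝ) (x : Euc n) : tfun f ε x 0 = Real.log (f 0) := by
  simp [tfun]

lemma psf_ge (ε : ℝ) (x : Euc n) (hε : 0 ≤ ε) : Real.log (f 0) ≤ psf f ε x := by
  have := psf_nonempty (f := f) h0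
  have h := le_ciSup (bddAbove_tfun hR hCM h0 hR0 hε x) (⟨0, h0⟩ : {z : Euc n // 0 < f z})
  simpa [psf, tfun] using h

lemma psf_mono {ε₁ ε₂ : ℝ} (h1 : 0 ≤ ε₁) (h12 : ε₁ ≤ ε₂) (x : Euc n) :
    psf f ε₂ x ≤ psf f ε₁ x := by
  have := psf_nonempty (f := f) h0
  refine ciSup_le fun z => ?_
  refine le_ciSup_of_le (bddAbove_tfun hR hCM h0 hR0 h1 x) z ?_
  unfold tfun
  have : ε₁ * (‖z.1‖ ^ 2 / 2) ≤ ε₂ * (‖z.1‖ ^ 2 / 2) := by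
    apply mul_le_mul_of_nonneg_right h12; positivity
  linarith

lemma psf_lower {ε : ℝ} (hε : 0 ≤ ε) (x : Euc n) :
    psf f 0 x - ε * (R ^ 2 / 2) ≤ psf f ε x := by
  have := psf_nonempty (f := f) h0
  rw [sub_le_iff_le_add]
  refine ciSup_le fun z => ?_
  have hz : tfun f 0 x z.1 ≤ tfun f ε x z.1 + ε * (R ^ 2 / 2) := by
    unfold tfun
    have h1 : ‖z.1‖ ^ 2 ≤ R ^ 2 := by
      have := hR z.1 z.2
      nlinarith [norm_nonneg z.1]
    have : ε * (‖z.1‖ ^ 2 / 2) ≤ ε * (R ^ 2 / 2) := by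
      apply mul_le_mul_of_nonneg_left _ hε; linarith
    linarith
  exact hz.trans (add_le_add_left (le_ciSup (bddAbove_tfun hR hCM h0 hR0 hε x) z) _)

lemma psf_lip {ε : ℝ} (hε : 0 ≤ ε) (x y : Euc n) :
    psf f ε x ≤ psf f ε y + R * ‖x - y‖ := by
  have := psf_nonempty (f := f) h0
  refine ciSup_le fun z => ?_
  have h1 : tfun f ε x z.1 = tfun f ε y z.1 + ⟪x - y, z.1⟫ := by
    unfold tfun; rw [inner_sub_left]; ring
  have h2 : ⟪x - y, z.1⟫ ≤ R * ‖x - y‖ := by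
    calc ⟪x - y, z.1⟫ ≤ ‖x - y‖ * ‖z.1‖ := real_inner_le_norm _ _
      _ ≤ ‖x - y‖ * R := mul_le_mul_of_nonneg_left (hR z.1 z.2) (norm_nonneg _)
      _ = R * ‖x - y‖ := mul_comm _ _
  have h3 := le_ciSup (bddAbove_tfun hR hCM h0 hR0 hε y) z
  have h4 : (⨆ z : {z : Euc n // 0 < f z}, tfun f ε y z.1) = psf f ε y := rfl
  linarith

lemma psf_continuous {ε : ℝ} (hε : 0 ≤ ε) : Continuous (psf f ε) := by
  have hlip : LipschitzWith (Real.toNNReal R) (psf f ε) := by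
    refine LipschitzWith.of_dist_le_mul fun x y => ?_
    rw [Real.dist_eq, dist_eq_norm]
    rw [abs_sub_le_iff]
    have hc : (Real.toNNReal R : ℝ) = R := Real.coe_toNNReal R hR0
    constructor
    · have := psf_lip hR hCM h0 hR0 hε x y
      rw [hc]; linarith
    · have := psf_lip hR hCM h0 hR0 hε y x
      rw [hc, ← norm_sub_rev x y] at *
      linarith
  exact hlip.continuous

lemma gauss_term_eq {ε : ℝ} (x z : Euc n) (hz : 0 < f z) :
    gaussG (x - ε • z) * f z ^ ε = Real.exp (-‖x‖ ^ 2 / 2 + ε * tfun f ε x z) := by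
  rw [gaussG, Real.rpow_def_of_pos hz, ← Real.exp_add]
  congr 1
  have hn : ‖x - ε • z‖ ^ 2 = ‖x‖ ^ 2 - 2 * ⟪x, ε • z⟫ + ‖ε • z‖ ^ 2 := norm_sub_sq_real x (ε • z)
  have h1 : ⟪x, ε • z⟫ = ε * ⟪x, z⟫ := real_inner_smul_right x z ε
  have h2 : ‖ε • z‖ ^ 2 = ε ^ 2 * ‖z‖ ^ 2 := by
    rw [norm_smul, Real.norm_eq_abs, mul_pow, sq_abs]
  rw [hn, h1, h2]
  unfold tfun
  ring

lemma bddAbove_asplund {M : ℝ} (hM : ∀ x, f x ≤ M) (hf0 : ∀ x, 0 ≤ f x)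
    {ε : ℝ} (hε : 0 < ε) (x : Euc n) :
    BddAbove (Set.range fun y : Euc n => gaussG y * homoth ε f (x - y)) := by
  refine ⟨(M ⊔ 1) ^ ε, ?_⟩
  rintro r ⟨y, rfl⟩
  have hg1 : gaussG y ≤ 1 := by
    rw [gaussG, ← Real.exp_zero]
    apply Real.exp_le_exp.2
    have : (0:ℝ) ≤ ‖y‖ ^ 2 := by positivity
    linarith
  have hg0 : 0 ≤ gaussG y := (Real.exp_pos _).le
  have hh : homoth ε f (x - y) ≤ (M ⊔ 1) ^ ε := by
    rw [homoth]
    exact Real.rpow_le_rpow (hf0 _) ((hM _).trans le_sup_left) hε.le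
  have hh0 : (0:ℝ) ≤ homoth ε f (x - y) := Real.rpow_nonneg (hf0 _) _
  calc gaussG y * homoth ε f (x - y) ≤ 1 * ((M ⊔ 1) ^ ε) :=
        mul_le_mul hg1 hh hh0 zero_le_one
    _ = (M ⊔ 1) ^ ε := one_mul _

lemma asplund_eq {M : ℝ} (hM : ∀ x, f x ≤ M) (hf0 : ∀ x, 0 ≤ f x)
    {ε : ℝ} (hε : 0 < ε) (x : Euc n) :
    asplund gaussG (homoth ε f) x = Real.exp (-‖x‖ ^ 2 / 2 + ε * psf f ε x) := by
  have hne := psf_nonempty (f := f) h0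
  apply le_antisymm
  · refine ciSup_le fun y => ?_
    by_cases hz : 0 < f (ε⁻¹ • (x - y))
    · set z := ε⁻¹ • (x - y) with hzdef
      have hy : x - ε • z = y := by
        rw [hzdef, smul_inv_smul₀ hε.ne', sub_sub_cancel]
      have he : gaussG y * homoth ε f (x - y) = gaussG (x - ε • z) * f z ^ ε := by
        rw [hy]; rfl
      rw [he, gauss_term_eq hR hCM h0 hR0 x z hz]
      apply Real.exp_le_exp.2
      have := le_ciSup (bddAbove_tfun hR hCM h0 hR0 hε.le x) (⟨z, hz⟩ : {z : Euc n // 0 < f z})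
      have h5 : tfun f ε x z ≤ psf f ε x := this
      nlinarith
    · have hz0 : f (ε⁻¹ • (x - y)) = 0 := le_antisymm (not_lt.1 hz) (hf0 _)
      have : gaussG y * homoth ε f (x - y) = 0 := by
        rw [homoth, hz0, Real.zero_rpow hε.ne', mul_zero]
      rw [this]
      exact (Real.exp_pos _).le
  · have key : Real.exp (-‖x‖ ^ 2 / 2 + ε * psf f ε x)
        = ⨆ z : {z : Euc n // 0 < f z}, Real.exp (-‖x‖ ^ 2 / 2 + ε * tfun f ε x z.1) := by
      have hmono : Monotone (fun r : ℝ => Real.exp (-‖x‖ ^ 2 / 2 + ε * r)) := by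
        intro a b hab
        exact Real.exp_le_exp.2 (by nlinarith)
      exact hmono.map_ciSup_of_continuousAt
        (Continuous.continuousAt (by continuity))
        (bddAbove_tfun hR hCM h0 hR0 hε.le x)
    rw [key]
    refine ciSup_le fun z => ?_
    rw [← gauss_term_eq hR hCM h0 hR0 x z.1 z.2]
    refine le_ciSup_of_le (bddAbove_asplund hR hCM h0 hR0 hM hf0 hε x) (x - ε • z.1) ?_
    have : homoth ε f (x - (x - ε • z.1)) = f z.1 ^ ε := by
      rw [sub_sub_cancel, homoth, inv_smul_smul₀ hε.ne']
    rw [this]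

lemma legendre_eq {φ : Euc n → EReal} (hφ : IsNegLogOf φ f) (hf0 : ∀ x, 0 ≤ f x) (x : Euc n) :
    legendre φ x = ((psf f 0 x : ℝ) : EReal) := by
  have hne := psf_nonempty (f := f) h0
  have hterm : ∀ z : Euc n, 0 < f z →
      ((inner ℝ x z : ℝ) : EReal) - φ z = ((tfun f 0 x z : ℝ) : EReal) := by
    intro z hz
    rw [(hφ z).1 hz, ← EReal.coe_sub]
    norm_cast
    unfold tfun
    ring
  apply le_antisymm
  · refine iSup_le fun y => ?_
    by_cases hy : 0 < f y
    · rw [hterm y hy]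
      apply EReal.coe_le_coe_iff.2
      exact le_ciSup (bddAbove_tfun hR hCM h0 hR0 le_rfl x) (⟨y, hy⟩ : {z : Euc n // 0 < f z})
    · have hy0 : f y = 0 := le_antisymm (not_lt.1 hy) (hf0 y)
      rw [(hφ y).2 hy0, EReal.sub_top]
      exact bot_le
  · have hcoe : ((psf f 0 x : ℝ) : EReal)
        = ⨆ z : {z : Euc n // 0 < f z}, ((tfun f 0 x z.1 : ℝ) : EReal) :=
      ereal_coe_ciSup _ (bddAbove_tfun hR hCM h0 hR0 le_rfl x)
    rw [hcoe]
    refine iSup_le fun z => ?_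
    rw [← hterm z.1 z.2]
    exact le_iSup (fun y => ((inner ℝ x y : ℝ) : EReal) - φ y) z.1

lemma psf_continuous_exp {ε : ℝ} (hε : 0 ≤ ε) :
    Continuous (fun x : Euc n => Real.exp (-‖x‖ ^ 2 / 2 + ε * psf f ε x)) := by
  apply Continuous.rexp
  exact (((continuous_norm.pow 2).neg.div_const 2)).add
    (continuous_const.mul (psf_continuous hR hCM h0 hR0 hε))

lemma integrable_exp_eps (hCM0 : 0 ≤ CM) {ε : ℝ} (hε0 : 0 ≤ ε) (hε1 : ε ≤ 1) :
    Integrable (fun x : Euc n => Real.exp (-‖x‖ ^ 2 / 2 + ε * psf f ε x)) := by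
  refine integrable_of_le_gaussian n _
    (psf_continuous_exp hR hCM h0 hR0 hε0).aestronglyMeasurable R CM fun x => ?_
  rw [abs_of_pos (Real.exp_pos _)]
  apply Real.exp_le_exp.2
  have h1 : ε * psf f ε x ≤ ε * (R * ‖x‖ + CM) :=
    mul_le_mul_of_nonneg_left (psf_le hR hCM h0 hR0 hε0 x) hε0
  have h2 : 0 ≤ R * ‖x‖ + CM := by positivity
  nlinarith

lemma integrable_gaussG : Integrable (fun x : Euc n => gaussG x) := by
  refine integrable_of_le_gaussian n _
    (Continuous.aestronglyMeasurable (by unfold gaussG; continuity)) 0 0 fun x => ?_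
  rw [gaussG, abs_of_pos (Real.exp_pos _)]
  apply Real.exp_le_exp.2
  simp only [zero_mul, zero_add, add_zero]
  linarith

lemma abs_psf0_le (hCM0 : 0 ≤ CM) (x : Euc n) : |psf f 0 x| ≤ R * ‖x‖ + (CM + |Real.log (f 0)|) := by
  rw [abs_le]
  constructor
  · have h1 := psf_ge hR hCM h0 hR0 0 x le_rfl
    have hl : -|Real.log (f 0)| ≤ Real.log (f 0) := neg_abs_le _
    have h2 : (0:ℝ) ≤ R * ‖x‖ := by positivity
    linarith
  · have := psf_le hR hCM h0 hR0 le_rfl x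
    have : (0:ℝ) ≤ |Real.log (f 0)| := abs_nonneg _
    linarith [psf_le hR hCM h0 hR0 le_rfl x]

lemma integrable_psf_gauss (hCM0 : 0 ≤ CM) :
    Integrable (fun x : Euc n => psf f 0 x * Real.exp (-‖x‖ ^ 2 / 2)) := by
  refine integrable_of_le_gaussian n _
    (Continuous.aestronglyMeasurable ((psf_continuous hR hCM h0 hR0 le_rfl).mul
      (by continuity))) R (CM + |Real.log (f 0)|) fun x => ?_
  rw [abs_mul, abs_of_pos (Real.exp_pos _)]
  have h1 := abs_psf0_le hR hCM h0 hR0 hCM0 x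
  have h2 : R * ‖x‖ + (CM + |Real.log (f 0)|) ≤ Real.exp (R * ‖x‖ + (CM + |Real.log (f 0)|)) := by
    linarith [Real.add_one_le_exp (R * ‖x‖ + (CM + |Real.log (f 0)|))]
  calc |psf f 0 x| * Real.exp (-‖x‖ ^ 2 / 2)
      ≤ Real.exp (R * ‖x‖ + (CM + |Real.log (f 0)|)) * Real.exp (-‖x‖ ^ 2 / 2) := by
        apply mul_le_mul_of_nonneg_right (h1.trans h2) (Real.exp_pos _).le
    _ = Real.exp (R * ‖x‖ + (CM + |Real.log (f 0)|) + -‖x‖ ^ 2 / 2) := by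
        rw [← Real.exp_add]
    _ ≤ Real.exp (R * ‖x‖ + (CM + |Real.log (f 0)|) - ‖x‖ ^ 2 / 2) := by
        apply Real.exp_le_exp.2; ring_nf; exact le_rfl

lemma integrable_boundf (hCM0 : 0 ≤ CM) :
    Integrable (fun x : Euc n => Real.exp (-‖x‖ ^ 2 / 2) *
      ((R * ‖x‖ + (CM + |Real.log (f 0)| + R ^ 2 / 2)) *
        Real.exp (R * ‖x‖ + (CM + |Real.log (f 0)| + R ^ 2 / 2)))) := by
  set C₃ : ℝ := CM + |Real.log (f 0)| + R ^ 2 / 2 with hC3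
  have hC30 : 0 ≤ C₃ := by positivity
  refine integrable_of_le_gaussian n _
    (Continuous.aestronglyMeasurable (by continuity)) (2 * R) (2 * C₃) fun x => ?_
  have hc0 : 0 ≤ R * ‖x‖ + C₃ := by positivity
  have h2 : R * ‖x‖ + C₃ ≤ Real.exp (R * ‖x‖ + C₃) := by
    linarith [Real.add_one_le_exp (R * ‖x‖ + C₃)]
  rw [abs_of_nonneg (by positivity)]
  calc Real.exp (-‖x‖ ^ 2 / 2) * ((R * ‖x‖ + C₃) * Real.exp (R * ‖x‖ + C₃))
      ≤ Real.exp (-‖x‖ ^ 2 / 2) * (Real.exp (R * ‖x‖ + C₃) * Real.exp (R * ‖x‖ + C₃)) := by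
        apply mul_le_mul_of_nonneg_left _ (Real.exp_pos _).le
        apply mul_le_mul_of_nonneg_right h2 (Real.exp_pos _).le
    _ = Real.exp (2 * R * ‖x‖ + 2 * C₃ - ‖x‖ ^ 2 / 2) := by
        rw [← Real.exp_add, ← Real.exp_add]; ring_nf

lemma tendsto_pointwise (x : Euc n) :
    Tendsto (fun ε : ℝ =>
        (Real.exp (-‖x‖ ^ 2 / 2 + ε * psf f ε x) - Real.exp (-‖x‖ ^ 2 / 2)) / ε)
      (𝓝[>] (0:ℝ)) (𝓝 (Real.exp (-‖x‖ ^ 2 / 2) * psf f 0 x)) := by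
  set q : ℝ := Real.exp (-‖x‖ ^ 2 / 2) with hq
  set a : ℝ := psf f 0 x with ha
  set b : ℝ := R ^ 2 / 2 with hb
  have hq0 : 0 < q := Real.exp_pos _
  have hsub : 𝓝[>] (0:ℝ) ≤ 𝓝[≠] (0:ℝ) :=
    nhdsWithin_mono 0 fun y hy => ne_of_gt hy
  -- upper comparison function
  have hd2 : HasDerivAt (fun ε : ℝ => Real.exp (ε * a)) a 0 := by
    have h := ((hasDerivAt_id (0:ℝ)).mul_const a).exp
    simpa using h
  have hG2 : Tendsto (fun ε : ℝ => (Real.exp (ε * a) - 1) / ε) (𝓝[>] (0:ℝ)) (𝓝 a) := by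
    have h := (hasDerivAt_iff_tendsto_slope.1 hd2).mono_left hsub
    have heq : ∀ ε : ℝ, slope (fun ε : ℝ => Real.exp (ε * a)) 0 ε
        = (Real.exp (ε * a) - 1) / ε := by
      intro ε
      rw [slope_def_field]
      simp
    exact h.congr heq
  have hd1 : HasDerivAt (fun ε : ℝ => Real.exp (ε * a - ε ^ 2 * b)) a 0 := by
    have h1 : HasDerivAt (fun ε : ℝ => ε * a - ε ^ 2 * b) a 0 := by
      have := ((hasDerivAt_id (0:ℝ)).mul_const a).sub ((hasDerivAt_pow 2 (0:ℝ)).mul_const b)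
      simpa [Pi.sub_def] using this
    have h := h1.exp
    simpa using h
  have hG1 : Tendsto (fun ε : ℝ => (Real.exp (ε * a - ε ^ 2 * b) - 1) / ε)
      (𝓝[>] (0:ℝ)) (𝓝 a) := by
    have h := (hasDerivAt_iff_tendsto_slope.1 hd1).mono_left hsub
    have heq : ∀ ε : ℝ, slope (fun ε : ℝ => Real.exp (ε * a - ε ^ 2 * b)) 0 ε
        = (Real.exp (ε * a - ε ^ 2 * b) - 1) / ε := by
      intro ε
      rw [slope_def_field]
      simp
    exact h.congr heq
  have hlim1 : Tendsto (fun ε : ℝ => q * ((Real.exp (ε * a - ε ^ 2 * b) - 1) / ε))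
      (𝓝[>] (0:ℝ)) (𝓝 (q * a)) := hG1.const_mul q
  have hlim2 : Tendsto (fun ε : ℝ => q * ((Real.exp (ε * a) - 1) / ε))
      (𝓝[>] (0:ℝ)) (𝓝 (q * a)) := hG2.const_mul q
  refine tendsto_of_tendsto_of_tendsto_of_le_of_le' hlim1 hlim2 ?_ ?_
  · filter_upwards [self_mem_nhdsWithin] with ε (hε : 0 < ε)
    have hps : a - ε * b ≤ psf f ε x := by
      rw [ha, hb]
      have := psf_lower hR hCM h0 hR0 hε.le x
      linarith
    have hexp : Real.exp (ε * a - ε ^ 2 * b) ≤ Real.exp (ε * psf f ε x) := by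
      apply Real.exp_le_exp.2
      nlinarith
    have hF : (Real.exp (-‖x‖ ^ 2 / 2 + ε * psf f ε x) - Real.exp (-‖x‖ ^ 2 / 2)) / ε
        = q * ((Real.exp (ε * psf f ε x) - 1) / ε) := by
      rw [Real.exp_add, ← hq]
      ring
    rw [hF]
    apply mul_le_mul_of_nonneg_left _ hq0.le
    exact (div_le_div_iff_of_pos_right hε).2 (by linarith)
  · filter_upwards [self_mem_nhdsWithin] with ε (hε : 0 < ε)
    have hps : psf f ε x ≤ a := psf_mono hR hCM h0 hR0 le_rfl hε.le x
    have hexp : Real.exp (ε * psf f ε x) ≤ Real.exp (ε * a) :=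
      Real.exp_le_exp.2 (mul_le_mul_of_nonneg_left hps hε.le)
    have hF : (Real.exp (-‖x‖ ^ 2 / 2 + ε * psf f ε x) - Real.exp (-‖x‖ ^ 2 / 2)) / ε
        = q * ((Real.exp (ε * psf f ε x) - 1) / ε) := by
      rw [Real.exp_add, ← hq]
      ring
    rw [hF]
    apply mul_le_mul_of_nonneg_left _ hq0.le
    exact (div_le_div_iff_of_pos_right hε).2 (by linarith)

lemma abs_psf_eps_le (hCM0 : 0 ≤ CM) {ε : ℝ} (hε0 : 0 < ε) (hε1 : ε ≤ 1) (x : Euc n) :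
    |psf f ε x| ≤ R * ‖x‖ + (CM + |Real.log (f 0)| + R ^ 2 / 2) := by
  have h1 := abs_psf0_le hR hCM h0 hR0 hCM0 x
  rw [abs_le] at h1 ⊢
  have h2 : psf f ε x ≤ psf f 0 x := psf_mono hR hCM h0 hR0 le_rfl hε0.le x
  have h3 := psf_lower hR hCM h0 hR0 hε0.le x
  have h4 : ε * (R ^ 2 / 2) ≤ R ^ 2 / 2 := by nlinarith
  constructor
  · linarith
  · linarith

lemma tendsto_integral_diff (hCM0 : 0 ≤ CM) :
    Tendsto (fun ε : ℝ => ∫ x : Euc n,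
        (Real.exp (-‖x‖ ^ 2 / 2 + ε * psf f ε x) - Real.exp (-‖x‖ ^ 2 / 2)) / ε)
      (𝓝[>] (0:ℝ)) (𝓝 (∫ x : Euc n, Real.exp (-‖x‖ ^ 2 / 2) * psf f 0 x)) := by
  set C₃ : ℝ := CM + |Real.log (f 0)| + R ^ 2 / 2 with hC3
  refine tendsto_integral_filter_of_dominated_convergence
    (fun x : Euc n => Real.exp (-‖x‖ ^ 2 / 2) * ((R * ‖x‖ + C₃) * Real.exp (R * ‖x‖ + C₃)))
    ?_ ?_ (integrable_boundf hR hCM h0 hR0 hCM0) ?_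
  · filter_upwards [Ioc_mem_nhdsGT_of_mem (Set.mem_Ico.2 ⟨le_rfl, zero_lt_one⟩)]
      with ε hε
    apply Continuous.aestronglyMeasurable
    exact ((psf_continuous_exp hR hCM h0 hR0 hε.1.le).sub (by continuity)).div_const ε
  · filter_upwards [Ioc_mem_nhdsGT_of_mem (Set.mem_Ico.2 ⟨le_rfl, zero_lt_one⟩)]
      with ε hε
    refine Filter.Eventually.of_forall fun x => ?_
    obtain ⟨hε0, hε1⟩ := hε
    set cx : ℝ := R * ‖x‖ + C₃ with hcx
    have hcx0 : 0 ≤ cx := by rw [hcx, hC3]; positivity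
    have hpsa : |psf f ε x| ≤ cx := abs_psf_eps_le hR hCM h0 hR0 hCM0 hε0 hε1 x
    set t : ℝ := ε * psf f ε x with ht
    have htabs : |t| ≤ ε * cx := by
      rw [ht, abs_mul, abs_of_pos hε0]
      exact mul_le_mul_of_nonneg_left hpsa hε0.le
    have hkey : |Real.exp t - 1| ≤ (ε * cx) * Real.exp (ε * cx) := by
      refine (abs_exp_sub_one_le' t).trans ?_
      apply mul_le_mul htabs (Real.exp_le_exp.2 htabs) (Real.exp_pos _).le
      positivity
    have hεcx : ε * cx ≤ cx := by nlinarith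
    have hkey2 : |Real.exp t - 1| ≤ ε * (cx * Real.exp cx) := by
      refine hkey.trans ?_
      have := Real.exp_le_exp.2 hεcx
      have h9 : (ε * cx) * Real.exp (ε * cx) ≤ (ε * cx) * Real.exp cx := by
        apply mul_le_mul_of_nonneg_left this (by positivity)
      linarith [h9]
    have hFeq : (Real.exp (-‖x‖ ^ 2 / 2 + ε * psf f ε x) - Real.exp (-‖x‖ ^ 2 / 2)) / ε
        = Real.exp (-‖x‖ ^ 2 / 2) * ((Real.exp t - 1) / ε) := by
      rw [Real.exp_add, ht]
      ring
    rw [Real.norm_eq_abs, hFeq, abs_mul, abs_of_pos (Real.exp_pos _), abs_div,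
      abs_of_pos hε0]
    apply mul_le_mul_of_nonneg_left _ (Real.exp_pos (-‖x‖ ^ 2 / 2)).le
    rw [div_le_iff₀ hε0]
    calc |Real.exp t - 1| ≤ ε * (cx * Real.exp cx) := hkey2
      _ = cx * Real.exp cx * ε := by ring
  · exact Filter.Eventually.of_forall fun x => tendsto_pointwise hR hCM h0 hR0 x

end Main

/-- **Lemma.** If `f = e^{-φ}` is log-concave, compactly supported, bounded and
`f(0) > 0`, then `M̃*(f)` exists and equals `M*(f) = (2/n) ∫ Lφ dγₙ`. -/
theorem mean_width_eq_klartag_milman_of_compactly_supported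
    (n : ℕ) (hn : 0 < n) (f : Euc n → ℝ) (φ : Euc n → EReal)
    (hf : IsLogConcave f) (hφ : IsNegLogOf φ f)
    (hsupp : HasCompactSupport f) (hbdd : ∃ M : ℝ, ∀ x, f x ≤ M)
    (h0 : 0 < f 0) :
    Tendsto
      (fun ε : ℝ =>
        ((cconst n / ε : ℝ) : EReal) *
          ((asplundIntegral n f ε : EReal) - (gaussInt n : EReal)))
      (𝓝[>] (0 : ℝ)) (𝓝 (meanWidth n φ)) := by
  obtain ⟨hf0, -, -, -⟩ := hf
  obtain ⟨M, hM⟩ := hbdd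
  -- radius bound
  obtain ⟨r, hr⟩ := hsupp.isBounded.subset_closedBall (0 : Euc n)
  set R : ℝ := max r 0 with hRdef
  have hR0 : 0 ≤ R := le_max_right r 0
  have hR : ∀ z, 0 < f z → ‖z‖ ≤ R := by
    intro z hz
    have hzs : z ∈ tsupport f := subset_tsupport f (by simp [Function.mem_support, ne_of_gt hz])
    have := hr hzs
    rw [Metric.mem_closedBall, dist_zero_right] at this
    exact this.trans (le_max_left r 0)
  -- log bound
  set CM : ℝ := Real.log (max M 1) with hCMdef
  have hCM0 : 0 ≤ CM := Real.log_nonneg (le_max_right M 1)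
  have hCM : ∀ z, 0 < f z → Real.log (f z) ≤ CM := by
    intro z hz
    exact Real.log_le_log hz ((hM z).trans (le_max_left M 1))
  -- abbreviations
  set D : ℝ := (2 * π) ^ (-(n : ℝ) / 2) with hDdef
  have hD : 0 < D := Real.rpow_pos_of_pos (by positivity) _
  set I₀ : ℝ := ∫ x : Euc n, Real.exp (-‖x‖ ^ 2 / 2) * psf f 0 x with hI0def
  -- meanWidth = cconst * I₀
  have hmw : meanWidth n φ = ((cconst n * I₀ : ℝ) : EReal) := by
    have hleg : legendre φ = fun x => ((psf f 0 x : ℝ) : EReal) :=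
      funext fun x => legendre_eq hR hCM h0 hR0 hφ hf0 x
    have hcontd : Continuous fun x : Euc n =>
        (2 * π) ^ (-(n : ℝ) / 2) * Real.exp (-‖x‖ ^ 2 / 2) := by continuity
    have hmeasd : Measurable fun x : Euc n =>
        ENNReal.ofReal ((2 * π) ^ (-(n : ℝ) / 2) * Real.exp (-‖x‖ ^ 2 / 2)) :=
      ENNReal.measurable_ofReal.comp hcontd.measurable
    have hintγ : Integrable (psf f 0) (gaussianMeasure n) := by
      rw [gaussianMeasure,
        integrable_withDensity_iff hmeasd (Filter.Eventually.of_forall fun x =>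
          ENNReal.ofReal_lt_top)]
      have htr : ∀ x : Euc n, (ENNReal.ofReal ((2 * π) ^ (-(n : ℝ) / 2) *
          Real.exp (-‖x‖ ^ 2 / 2))).toReal
          = (2 * π) ^ (-(n : ℝ) / 2) * Real.exp (-‖x‖ ^ 2 / 2) :=
        fun x => ENNReal.toReal_ofReal (by positivity)
      refine ((integrable_psf_gauss hR hCM h0 hR0 hCM0).const_mul
        ((2 * π) ^ (-(n : ℝ) / 2))).congr (Filter.Eventually.of_forall fun x => ?_)
      simp only [htr]
      ring
    have hmeasd' : Measurable fun x : Euc n =>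
        Real.toNNReal ((2 * π) ^ (-(n : ℝ) / 2) * Real.exp (-‖x‖ ^ 2 / 2)) :=
      (continuous_real_toNNReal.comp hcontd).measurable
    have hγint_eq : ∫ x, psf f 0 x ∂(gaussianMeasure n) = D * I₀ := by
      rw [gaussianMeasure]
      have hrw : (fun x : Euc n =>
          ENNReal.ofReal ((2 * π) ^ (-(n : ℝ) / 2) * Real.exp (-‖x‖ ^ 2 / 2)))
          = fun x : Euc n => ((Real.toNNReal ((2 * π) ^ (-(n : ℝ) / 2) *
              Real.exp (-‖x‖ ^ 2 / 2)) : ℝ≥0) : ℝ≥0∞) := rfl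
      rw [hrw, integral_withDensity_eq_integral_smul hmeasd' (psf f 0)]
      have hsm : ∀ x : Euc n, Real.toNNReal ((2 * π) ^ (-(n : ℝ) / 2) *
          Real.exp (-‖x‖ ^ 2 / 2)) • psf f 0 x
          = D * (Real.exp (-‖x‖ ^ 2 / 2) * psf f 0 x) := by
        intro x
        have hpos : (0:ℝ) ≤ (2 * π) ^ (-(n : ℝ) / 2) * Real.exp (-‖x‖ ^ 2 / 2) := by positivity
        rw [NNReal.smul_def, Real.coe_toNNReal _ hpos, hDdef, smul_eq_mul]
        ring
      rw [integral_congr_ae (Filter.Eventually.of_forall hsm), integral_const_mul, hI0def]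
    rw [meanWidth, hleg, eIntegral_coe _ _ hintγ, hγint_eq, ← EReal.coe_mul]
    congr 1
    have hP : (0:ℝ) < (2 * π) ^ ((n : ℝ) / 2) := Real.rpow_pos_of_pos (by positivity) _
    have hDinv : D = ((2 * π) ^ ((n : ℝ) / 2))⁻¹ := by
      rw [hDdef, neg_div, Real.rpow_neg (by positivity)]
    have hn' : (n : ℝ) ≠ 0 := Nat.cast_ne_zero.2 hn.ne'
    rw [cconst, hDinv]
    field_simp
  -- eventual equality
  have hev : ∀ᶠ ε in 𝓝[>] (0:ℝ),
      ((cconst n / ε : ℝ) : EReal) *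
          ((asplundIntegral n f ε : EReal) - (gaussInt n : EReal))
        = ((cconst n * ∫ x : Euc n,
            (Real.exp (-‖x‖ ^ 2 / 2 + ε * psf f ε x) - Real.exp (-‖x‖ ^ 2 / 2)) / ε : ℝ) :
            EReal) := by
    filter_upwards [Ioc_mem_nhdsGT_of_mem (Set.mem_Ico.2 ⟨le_rfl, zero_lt_one⟩)]
      with ε hε
    obtain ⟨hε0, hε1⟩ := hε
    have hAint := integrable_exp_eps hR hCM h0 hR0 hCM0 hε0.le hε1
    have hgint : Integrable (fun x : Euc n => Real.exp (-‖x‖ ^ 2 / 2)) :=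
      integrable_gaussG hR hCM h0 hR0
    set A : ℝ := ∫ x : Euc n, Real.exp (-‖x‖ ^ 2 / 2 + ε * psf f ε x) with hAdef
    set g₀ : ℝ := ∫ x : Euc n, Real.exp (-‖x‖ ^ 2 / 2) with hg0def
    have hA0 : 0 ≤ A := integral_nonneg fun x => (Real.exp_pos _).le
    have hg00 : 0 ≤ g₀ := integral_nonneg fun x => (Real.exp_pos _).le
    have ha : asplundIntegral n f ε = ENNReal.ofReal A := by
      rw [asplundIntegral,
        lintegral_congr fun x =>
          congrArg ENNReal.ofReal (asplund_eq hR hCM h0 hR0 hM hf0 hε0 x),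
        ← MeasureTheory.ofReal_integral_eq_lintegral_ofReal hAint
          (Filter.Eventually.of_forall fun x => (Real.exp_pos _).le)]
    have hb : gaussInt n = ENNReal.ofReal g₀ := by
      rw [gaussInt, hg0def,
        MeasureTheory.ofReal_integral_eq_lintegral_ofReal hgint
          (Filter.Eventually.of_forall fun x => (Real.exp_pos _).le)]
      rfl
    have hdiff : (∫ x : Euc n,
        (Real.exp (-‖x‖ ^ 2 / 2 + ε * psf f ε x) - Real.exp (-‖x‖ ^ 2 / 2)) / ε)
        = (A - g₀) / ε := by
      rw [integral_div, integral_sub hAint hgint]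
    rw [ha, hb, EReal.coe_ennreal_ofReal, EReal.coe_ennreal_ofReal,
      max_eq_left hA0, max_eq_left hg00, ← EReal.coe_sub, ← EReal.coe_mul, hdiff,
      EReal.coe_eq_coe_iff]
    field_simp
  rw [hmw]
  refine Tendsto.congr' (hev.mono fun ε h => h.symm) ?_
  rw [EReal.tendsto_coe]
  exact (tendsto_integral_diff hR hCM h0 hR0 hCM0).const_mul (cconst n)

end
end

section
/- Let f = e^{-φ} be a log-concave function on ℝⁿ. If (Lφ)(x) < ∞ for every x ∈ ℝⁿ, then ∫_{ℝⁿ} (G ⋆ (ε·f))(x) dx → ∫_{ℝⁿ} G(x) dx as ε → 0⁺. -/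
open MeasureTheory Filter Topology Real
open scoped ENNReal NNReal RealInnerProductSpace

noncomputable section

open scoped Pointwise

namespace AsplundAux

variable {n : ℕ} {f : Euc n → ℝ} {φ : Euc n → EReal}

lemma legendre_real_bound (hL : ∀ x, legendre φ x < ⊤) (hφ : IsNegLogOf φ f)
    (z : Euc n) : ∀ w, 0 < f w → ⟪z, w⟫ + Real.log (f w) ≤ max 0 (legendre φ z).toReal := by
  intro w hw
  have h1 : ((⟪z, w⟫ : ℝ) : EReal) - φ w ≤ legendre φ z :=
    le_iSup (fun y => ((inner ℝ z y : ℝ) : EReal) - φ y) w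
  rw [(hφ w).1 hw] at h1
  have h2 : ((⟪z, w⟫ + Real.log (f w) : ℝ) : EReal) ≤ legendre φ z := by
    have : ((⟪z, w⟫ + Real.log (f w) : ℝ) : EReal)
        = ((⟪z, w⟫ : ℝ) : EReal) - ((- Real.log (f w) : ℝ) : EReal) := by
      rw [← EReal.coe_sub]; norm_num
    rw [this]; exact h1
  have htop : legendre φ z ≠ ⊤ := (hL z).ne
  have hbot : legendre φ z ≠ ⊥ := by
    intro h; rw [h, le_bot_iff] at h2; exact EReal.coe_ne_bot _ h2
  refine le_trans ?_ (le_max_right _ _)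
  rw [← EReal.coe_le_coe_iff, EReal.coe_toReal htop hbot]
  exact h2

lemma exists_M (hf0 : ∀ x, 0 ≤ f x) (hL : ∀ x, legendre φ x < ⊤) (hφ : IsNegLogOf φ f)
    (R : ℝ) (hR : 0 ≤ R) :
    ∃ M : ℝ, 0 ≤ M ∧ ∀ w, 0 < f w → R * ‖w‖ + Real.log (f w) ≤ M := by
  classical
  set c : Euc n → ℝ := fun z => max 0 (legendre φ z).toReal with hc
  have hcnn : ∀ z, 0 ≤ c z := fun z => le_max_left _ _
  have hckey : ∀ z w, 0 < f w → ⟪z, w⟫ + Real.log (f w) ≤ c z :=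
    fun z => legendre_real_bound hL hφ z
  set b : ℝ := R * Real.sqrt n with hb
  have hbnn : 0 ≤ b := mul_nonneg hR (Real.sqrt_nonneg _)
  set E : Fin n → Euc n := fun i => EuclideanSpace.single i (1:ℝ) with hE
  refine ⟨c 0 + ∑ i : Fin n, (c (b • E i) + c (-(b • E i))), ?_, ?_⟩
  · have : (0:ℝ) ≤ ∑ i : Fin n, (c (b • E i) + c (-(b • E i))) :=
      Finset.sum_nonneg fun i _ => add_nonneg (hcnn _) (hcnn _)
    linarith [hcnn (0 : Euc n)]
  · intro w hw
    by_cases hw0 : w = 0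
    · have h0 : ⟪(0 : Euc n), w⟫ + Real.log (f w) ≤ c 0 := hckey 0 w hw
      rw [inner_zero_left] at h0
      have : (0:ℝ) ≤ ∑ i : Fin n, (c (b • E i) + c (-(b • E i))) :=
        Finset.sum_nonneg fun i _ => add_nonneg (hcnn _) (hcnn _)
      subst hw0
      simp only [norm_zero, mul_zero, zero_add]
      linarith
    · -- pick coordinate of maximal absolute value
      have hne : ∃ i, w i ≠ 0 := by
        by_contra h; push_neg at h; exact hw0 (PiLp.ext fun i => by simpa using h i)
      obtain ⟨i₀, hi₀⟩ := hne
      obtain ⟨i, _, hmax⟩ := Finset.exists_max_image Finset.univ (fun i => |w i|) ⟨i₀, Finset.mem_univ i₀⟩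
      have hnw : ‖w‖ ≤ Real.sqrt n * |w i| := by
        rw [EuclideanSpace.norm_eq]
        have : ∑ j, ‖w j‖ ^ 2 ≤ (n : ℝ) * |w i| ^ 2 := by
          calc ∑ j, ‖w j‖ ^ 2 ≤ ∑ _j : Fin n, |w i| ^ 2 := by
                refine Finset.sum_le_sum fun j _ => ?_
                rw [Real.norm_eq_abs]
                exact pow_le_pow_left₀ (abs_nonneg _) (hmax j (Finset.mem_univ j)) 2
            _ = (n : ℝ) * |w i| ^ 2 := by simp [Finset.sum_const]
        calc Real.sqrt (∑ j, ‖w j‖ ^ 2) ≤ Real.sqrt ((n:ℝ) * |w i| ^ 2) := Real.sqrt_le_sqrt this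
          _ = Real.sqrt n * |w i| := by
              rw [Real.sqrt_mul (Nat.cast_nonneg n), Real.sqrt_sq_eq_abs, abs_abs]
      set z : Euc n := if 0 ≤ w i then b • E i else -(b • E i) with hz
      have hinner : ⟪z, w⟫ = b * |w i| := by
        have hsingle : ⟪E i, w⟫ = w i := by
          simp [hE, EuclideanSpace.inner_single_left]
        by_cases hwi : 0 ≤ w i
        · rw [hz, if_pos hwi, real_inner_smul_left, hsingle, abs_of_nonneg hwi]
        · rw [hz, if_neg hwi, inner_neg_left, real_inner_smul_left, hsingle,
            abs_of_neg (lt_of_not_ge hwi)]; ring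
      have hcz : c z ≤ ∑ i : Fin n, (c (b • E i) + c (-(b • E i))) := by
        have hle : c z ≤ c (b • E i) + c (-(b • E i)) := by
          by_cases hwi : 0 ≤ w i
          · rw [hz, if_pos hwi]; linarith [hcnn (-(b • E i))]
          · rw [hz, if_neg hwi]; linarith [hcnn (b • E i)]
        refine hle.trans (Finset.single_le_sum (f := fun j => c (b • E j) + c (-(b • E j)))
          (fun j _ => add_nonneg (hcnn _) (hcnn _)) (Finset.mem_univ i))
      have hkey := hckey z w hw
      rw [hinner] at hkey
      have hRw : R * ‖w‖ ≤ b * |w i| := by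
        calc R * ‖w‖ ≤ R * (Real.sqrt n * |w i|) := mul_le_mul_of_nonneg_left hnw hR
          _ = b * |w i| := by rw [hb]; ring
      linarith [hcnn (0 : Euc n)]

lemma term_le (hf0 : ∀ x, 0 ≤ f x) {R M ε : ℝ} (hε : 0 < ε)
    (hM : ∀ w, 0 < f w → R * ‖w‖ + Real.log (f w) ≤ M)
    (x y : Euc n) :
    gaussG y * homoth ε f (x - y) ≤ Real.exp (ε * M - ‖y‖ ^ 2 / 2 - R * ‖x - y‖) := by
  set w : Euc n := ε⁻¹ • (x - y) with hw
  rcases eq_or_lt_of_le (hf0 w) with h0 | hpos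
  · have : homoth ε f (x - y) = 0 := by
      rw [homoth, ← hw, ← h0, Real.zero_rpow hε.ne']
    rw [this, mul_zero]
    exact (Real.exp_pos _).le
  · have hhom : homoth ε f (x - y) = Real.exp (ε * Real.log (f w)) := by
      rw [homoth, ← hw, Real.rpow_def_of_pos hpos, mul_comm]
    have hnorm : ‖w‖ = ε⁻¹ * ‖x - y‖ := by
      rw [hw, norm_smul, Real.norm_eq_abs, abs_of_pos (inv_pos.2 hε)]
    have hlog := hM w hpos
    have hmul : ε * Real.log (f w) ≤ ε * M - R * ‖x - y‖ := by
      have h1 : Real.log (f w) ≤ M - R * ‖w‖ := by linarith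
      have h2 : ε * Real.log (f w) ≤ ε * (M - R * ‖w‖) :=
        mul_le_mul_of_nonneg_left h1 hε.le
      rw [hnorm] at h2
      calc ε * Real.log (f w) ≤ ε * (M - R * (ε⁻¹ * ‖x - y‖)) := h2
        _ = ε * M - (ε * ε⁻¹) * (R * ‖x - y‖) := by ring
        _ = ε * M - R * ‖x - y‖ := by rw [mul_inv_cancel₀ hε.ne']; ring
    rw [gaussG, hhom, ← Real.exp_add]
    apply Real.exp_le_exp.2
    linarith

lemma geom_ineq {R : ℝ} (hR : 0 ≤ R) (x y : Euc n) :
    (if ‖x‖ ≤ R then ‖x‖ ^ 2 / 2 else R * ‖x‖ - R ^ 2 / 2) ≤ ‖y‖ ^ 2 / 2 + R * ‖x - y‖ := by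
  have h1 : ‖x‖ - ‖y‖ ≤ ‖x - y‖ := norm_sub_norm_le x y
  have hx : 0 ≤ ‖x‖ := norm_nonneg x
  have hy : 0 ≤ ‖y‖ := norm_nonneg y
  have hxy : 0 ≤ ‖x - y‖ := norm_nonneg _
  split_ifs with h
  · nlinarith [sq_nonneg (‖x‖ - ‖y‖), mul_le_mul_of_nonneg_left h1 hR,
      mul_nonneg hR hxy, mul_le_mul_of_nonneg_right h hxy]
  · nlinarith [sq_nonneg (‖y‖ - R), mul_le_mul_of_nonneg_left h1 hR]

lemma asplund_le (hf0 : ∀ x, 0 ≤ f x) {R M ε : ℝ} (hε : 0 < ε) (hR : 0 ≤ R)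
    (hM : ∀ w, 0 < f w → R * ‖w‖ + Real.log (f w) ≤ M) (x : Euc n) :
    asplund gaussG (homoth ε f) x
      ≤ Real.exp (ε * M) * Real.exp (-(if ‖x‖ ≤ R then ‖x‖ ^ 2 / 2 else R * ‖x‖ - R ^ 2 / 2)) := by
  rw [asplund, ← Real.exp_add]
  refine ciSup_le fun y => ?_
  refine (term_le hf0 hε hM x y).trans (Real.exp_le_exp.2 ?_)
  have := geom_ineq hR x y
  linarith

lemma bddAbove_term (hf0 : ∀ x, 0 ≤ f x) {M₀ ε : ℝ} (hε : 0 < ε)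
    (hM : ∀ w, 0 < f w → 0 * ‖w‖ + Real.log (f w) ≤ M₀) (x : Euc n) :
    BddAbove (Set.range fun y : Euc n => gaussG y * homoth ε f (x - y)) := by
  refine ⟨Real.exp (ε * M₀), ?_⟩
  rintro _ ⟨y, rfl⟩
  refine (term_le hf0 hε hM x y).trans (Real.exp_le_exp.2 ?_)
  nlinarith [sq_nonneg ‖y‖, norm_nonneg (x - y)]

lemma hfun_le {R : ℝ} (hR : 4 ≤ R) (x : Euc n) :
    Real.exp (-(if ‖x‖ ≤ R then ‖x‖ ^ 2 / 2 else R * ‖x‖ - R ^ 2 / 2))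
      ≤ gaussG x + Real.exp (-R ^ 2 / 4) * Real.exp (-‖x‖) := by
  split_ifs with h
  · have : Real.exp (-(‖x‖ ^ 2 / 2)) = gaussG x := by rw [gaussG]; ring_nf
    rw [this]
    nlinarith [mul_pos (Real.exp_pos (-R ^ 2 / 4)) (Real.exp_pos (-‖x‖))]
  · push_neg at h
    have h2 : -(R * ‖x‖ - R ^ 2 / 2) ≤ -R ^ 2 / 4 + -‖x‖ := by nlinarith
    calc Real.exp (-(R * ‖x‖ - R ^ 2 / 2)) ≤ Real.exp (-R ^ 2 / 4 + -‖x‖) := Real.exp_le_exp.2 h2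
      _ = Real.exp (-R ^ 2 / 4) * Real.exp (-‖x‖) := Real.exp_add _ _
      _ ≤ _ := le_add_of_nonneg_left (le_of_lt (by rw [gaussG]; exact Real.exp_pos _))

lemma gaussG_pos (x : Euc n) : 0 < gaussG x := Real.exp_pos _

lemma measurable_ofReal_gaussG : Measurable fun x : Euc n => ENNReal.ofReal (gaussG x) := by
  apply Measurable.ennreal_ofReal
  exact (Real.continuous_exp.comp ((continuous_norm.pow 2).neg.div_const 2)).measurable

lemma integral_upper (hf0 : ∀ x, 0 ≤ f x) {R M ε : ℝ} (hε : 0 < ε) (hR : 4 ≤ R)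
    (hM : ∀ w, 0 < f w → R * ‖w‖ + Real.log (f w) ≤ M) :
    asplundIntegral n f ε ≤ ENNReal.ofReal (Real.exp (ε * M)) *
      (gaussInt n + ENNReal.ofReal (Real.exp (-R ^ 2 / 4)) *
        ∫⁻ x : Euc n, ENNReal.ofReal (Real.exp (-‖x‖))) := by
  have hR0 : (0:ℝ) ≤ R := by linarith
  calc asplundIntegral n f ε
      ≤ ∫⁻ x : Euc n, ENNReal.ofReal (Real.exp (ε * M)) *
          (ENNReal.ofReal (gaussG x) +
            ENNReal.ofReal (Real.exp (-R ^ 2 / 4)) * ENNReal.ofReal (Real.exp (-‖x‖))) := by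
        rw [asplundIntegral]
        refine lintegral_mono fun x => ?_
        calc ENNReal.ofReal (asplund gaussG (homoth ε f) x)
            ≤ ENNReal.ofReal (Real.exp (ε * M) *
                (gaussG x + Real.exp (-R ^ 2 / 4) * Real.exp (-‖x‖))) := by
              apply ENNReal.ofReal_le_ofReal
              exact (asplund_le hf0 hε hR0 hM x).trans
                (mul_le_mul_of_nonneg_left (hfun_le hR x) (Real.exp_pos _).le)
          _ = _ := by
              rw [ENNReal.ofReal_mul (Real.exp_pos _).le,
                ENNReal.ofReal_add (gaussG_pos x).le (by positivity),
                ENNReal.ofReal_mul (Real.exp_pos _).le]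
    _ = _ := by
        rw [lintegral_const_mul' _ _ ENNReal.ofReal_ne_top,
          lintegral_add_left measurable_ofReal_gaussG,
          lintegral_const_mul' _ _ ENNReal.ofReal_ne_top]
        rfl

lemma integral_lower (hf0 : ∀ x, 0 ≤ f x) {M₀ ε : ℝ} (hε : 0 < ε)
    (hM : ∀ w, 0 < f w → 0 * ‖w‖ + Real.log (f w) ≤ M₀) (x₀ : Euc n) :
    ENNReal.ofReal (f x₀ ^ ε) * gaussInt n ≤ asplundIntegral n f ε := by
  have hc : (0:ℝ) ≤ f x₀ ^ ε := Real.rpow_nonneg (hf0 x₀) ε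
  calc ENNReal.ofReal (f x₀ ^ ε) * gaussInt n
      = ∫⁻ x : Euc n, ENNReal.ofReal (f x₀ ^ ε * gaussG (x + -(ε • x₀))) := by
        rw [gaussInt, ← lintegral_const_mul' _ _ ENNReal.ofReal_ne_top]
        rw [← lintegral_add_right_eq_self
          (fun x : Euc n => ENNReal.ofReal (f x₀ ^ ε) * ENNReal.ofReal (gaussG x)) (-(ε • x₀))]
        congr 1; funext x
        rw [← ENNReal.ofReal_mul hc]
    _ ≤ asplundIntegral n f ε := by
        rw [asplundIntegral]
        refine lintegral_mono fun x => ?_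
        apply ENNReal.ofReal_le_ofReal
        have hterm : gaussG (x - ε • x₀) * homoth ε f (x - (x - ε • x₀))
            ≤ asplund gaussG (homoth ε f) x :=
          le_ciSup (bddAbove_term hf0 hε hM x) (x - ε • x₀)
        have heq : homoth ε f (x - (x - ε • x₀)) = f x₀ ^ ε := by
          rw [homoth, sub_sub_cancel, smul_smul, inv_mul_cancel₀ hε.ne', one_smul]
        rw [heq, sub_eq_add_neg] at hterm
        linarith [hterm]

lemma integrable_gaussG : Integrable (fun x : Euc n => gaussG x) := by
  have h := (GaussianFourier.integrable_cexp_neg_mul_sq_norm_add (V := Euc n)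
      (b := (1/2 : ℂ)) (by norm_num) 0 0).norm
  apply h.congr
  filter_upwards with v
  simp [Complex.norm_exp, gaussG]
  norm_cast
  ring_nf

lemma integrable_expNegNorm : Integrable (fun x : Euc n => Real.exp (-‖x‖)) := by
  have hint := integrable_one_add_norm (E := Euc n) (μ := volume) (r := n+1) (by
    rw [finrank_euclideanSpace_fin]; exact_mod_cast lt_add_one (n:ℝ))
  apply Integrable.mono' (hint.const_mul ((n+1).factorial * Real.exp 1))
  · exact (Real.continuous_exp.comp continuous_norm.neg).aestronglyMeasurable
  · filter_upwards with x
    rw [Real.norm_eq_abs, abs_of_pos (Real.exp_pos _)]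
    have h1 : (0:ℝ) < 1 + ‖x‖ := by positivity
    have h2 : (1 + ‖x‖) ^ (n+1) ≤ ((n+1).factorial : ℝ) * Real.exp (1 + ‖x‖) := by
      rw [← div_le_iff₀' (by positivity)]
      calc (1 + ‖x‖) ^ (n+1) / (n+1).factorial
          ≤ ∑ i ∈ Finset.range (n+2), (1 + ‖x‖) ^ i / i.factorial := by
            refine Finset.single_le_sum (f := fun i => (1 + ‖x‖)^i / i.factorial) ?_ ?_
            · intro i _; positivity
            · simp
        _ ≤ Real.exp (1 + ‖x‖) := Real.sum_le_exp_of_nonneg h1.le _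
    have h3 : (1 + ‖x‖) ^ (-(n+1:ℝ)) = ((1 + ‖x‖) ^ (n+1) : ℝ)⁻¹ := by
      rw [Real.rpow_neg h1.le]; norm_cast
    rw [h3, ← div_eq_mul_inv, le_div_iff₀ (by positivity : (0:ℝ) < (1 + ‖x‖) ^ (n+1))]
    have hE : Real.exp (-‖x‖) * Real.exp (1 + ‖x‖) = Real.exp 1 := by
      rw [← Real.exp_add]; ring_nf
    nlinarith [mul_le_mul_of_nonneg_left h2 (Real.exp_pos (-‖x‖)).le]

theorem main_thm
    (hf : IsLogConcave f) (hφ : IsNegLogOf φ f)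
    (hL : ∀ x, legendre φ x < ⊤) :
    Tendsto (fun ε : ℝ => asplundIntegral n f ε) (𝓝[>] (0 : ℝ)) (𝓝 (gaussInt n)) := by
  obtain ⟨hf0, ⟨x₀, hx₀ne⟩, -, -⟩ := hf
  have hx₀ : 0 < f x₀ := lt_of_le_of_ne (hf0 x₀) (Ne.symm hx₀ne)
  have hGlt : gaussInt n < ⊤ := by
    rw [gaussInt]; exact Integrable.lintegral_lt_top integrable_gaussG
  set CC : ℝ≥0∞ := ∫⁻ x : Euc n, ENNReal.ofReal (Real.exp (-‖x‖)) with hCCdef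
  have hCC : CC < ⊤ := Integrable.lintegral_lt_top integrable_expNegNorm
  obtain ⟨M₀, hM₀nn, hM₀⟩ := exists_M hf0 hL hφ 0 le_rfl
  have hM₀' : ∀ w, 0 < f w → 0 * ‖w‖ + Real.log (f w) ≤ M₀ := hM₀
  rw [tendsto_order]
  constructor
  · intro a ha
    have h2 : Tendsto (fun ε : ℝ => f x₀ ^ ε) (𝓝[>] (0:ℝ)) (𝓝 1) := by
      have heq : (fun ε : ℝ => f x₀ ^ ε) = fun ε : ℝ => Real.exp (Real.log (f x₀) * ε) :=
        funext fun ε => Real.rpow_def_of_pos hx₀ ε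
      rw [heq]
      have hcont : Tendsto (fun ε : ℝ => Real.exp (Real.log (f x₀) * ε)) (𝓝 0)
          (𝓝 (Real.exp (Real.log (f x₀) * 0))) :=
        (Real.continuous_exp.comp (continuous_const.mul continuous_id)).tendsto 0
      simpa using hcont.mono_left nhdsWithin_le_nhds
    have h1 : Tendsto (fun ε : ℝ => ENNReal.ofReal (f x₀ ^ ε) * gaussInt n) (𝓝[>] (0:ℝ))
        (𝓝 (1 * gaussInt n)) := by
      refine ENNReal.Tendsto.mul_const ?_ (Or.inl one_ne_zero)
      have := (ENNReal.continuous_ofReal.tendsto 1).comp h2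
      simpa [Function.comp_def] using this
    rw [one_mul] at h1
    filter_upwards [h1.eventually_const_lt ha, self_mem_nhdsWithin] with ε he1 he2
    exact lt_of_lt_of_le he1 (integral_lower hf0 he2 hM₀' x₀)
  · intro a ha
    obtain ⟨b, hb1, hb2⟩ := exists_between ha
    have t1 : Tendsto (fun k : ℕ => (k:ℝ)) atTop atTop := tendsto_natCast_atTop_atTop
    have tsq : Tendsto (fun k : ℕ => (k:ℝ) ^ 2 / 4) atTop atTop := by
      refine tendsto_atTop_mono' atTop ?_ t1
      filter_upwards [eventually_ge_atTop 8] with k hk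
      have hk' : (8:ℝ) ≤ (k:ℝ) := by exact_mod_cast hk
      nlinarith
    have t2 : Tendsto (fun k : ℕ => -(k:ℝ) ^ 2 / 4) atTop atBot := by
      simp only [neg_div]
      exact tendsto_neg_atBot_iff.2 tsq
    have t3 : Tendsto (fun k : ℕ => Real.exp (-(k:ℝ) ^ 2 / 4)) atTop (𝓝 0) :=
      Real.tendsto_exp_atBot.comp t2
    have t4 : Tendsto (fun k : ℕ => ENNReal.ofReal (Real.exp (-(k:ℝ) ^ 2 / 4))) atTop (𝓝 0) := by
      have := (ENNReal.continuous_ofReal.tendsto 0).comp t3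
      simpa [Function.comp_def] using this
    have t5 : Tendsto (fun k : ℕ => gaussInt n + ENNReal.ofReal (Real.exp (-(k:ℝ) ^ 2 / 4)) * CC)
        atTop (𝓝 (gaussInt n)) := by
      have := (ENNReal.Tendsto.mul_const t4 (Or.inr hCC.ne)).const_add (gaussInt n)
      simpa using this
    obtain ⟨k, hk⟩ := ((t5.eventually_lt_const hb1).and (eventually_ge_atTop 4)).exists
    have hk4 : (4:ℝ) ≤ (k:ℝ) := by exact_mod_cast hk.2
    obtain ⟨M, hMnn, hM⟩ := exists_M hf0 hL hφ (k:ℝ) (by linarith)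
    have hupper : Tendsto (fun ε : ℝ => ENNReal.ofReal (Real.exp (ε * M)) *
        (gaussInt n + ENNReal.ofReal (Real.exp (-(k:ℝ) ^ 2 / 4)) * CC)) (𝓝[>] (0:ℝ))
        (𝓝 (1 * (gaussInt n + ENNReal.ofReal (Real.exp (-(k:ℝ) ^ 2 / 4)) * CC))) := by
      refine ENNReal.Tendsto.mul_const ?_ (Or.inl one_ne_zero)
      have hcont : Tendsto (fun ε : ℝ => Real.exp (ε * M)) (𝓝 0) (𝓝 (Real.exp (0 * M))) :=
        (Real.continuous_exp.comp (continuous_id.mul continuous_const)).tendsto 0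
      have := (ENNReal.continuous_ofReal.tendsto (Real.exp (0 * M))).comp hcont
      simp only [zero_mul, Real.exp_zero, ENNReal.ofReal_one] at this
      exact this.mono_left nhdsWithin_le_nhds
    rw [one_mul] at hupper
    have hlt : gaussInt n + ENNReal.ofReal (Real.exp (-(k:ℝ) ^ 2 / 4)) * CC < a :=
      hk.1.trans hb2
    filter_upwards [hupper.eventually_lt_const hlt, self_mem_nhdsWithin] with ε he1 he2
    exact lt_of_le_of_lt (integral_upper hf0 he2 hk4 hM) he1

end AsplundAux

/-- **Lemma.** If `f = e^{-φ}` is log-concave and `(Lφ)(x) < ∞` for every `x`,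
then `∫ G ⋆ (ε·f) → ∫ G` as `ε → 0⁺`. -/
theorem asplundIntegral_tendsto_gaussInt_of_legendre_finite
    (n : ℕ) (f : Euc n → ℝ) (φ : Euc n → EReal)
    (hf : IsLogConcave f) (hφ : IsNegLogOf φ f)
    (hL : ∀ x, legendre φ x < ⊤) :
    Tendsto (fun ε : ℝ => asplundIntegral n f ε) (𝓝[>] (0 : ℝ)) (𝓝 (gaussInt n)) :=
  AsplundAux.main_thm hf hφ hL

end
end

section
/- Let f = e^{-φ} be a log-concave function on ℝⁿ. If there exists a point x₀ ∈ ℝⁿ with (Lφ)(x₀) = ∞, then ∫_{ℝⁿ} (G ⋆ (ε·f))(x) dx does not converge to ∫_{ℝⁿ} G(x) dx as ε → 0⁺; in fact liminf_{ε→0⁺} ∫ (G ⋆ (ε·f)) > ∫ G. -/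
open MeasureTheory Filter Topology Real
open scoped ENNReal NNReal RealInnerProductSpace

noncomputable section

open scoped Pointwise

/-! ### Auxiliary lemmas -/

lemma gaussG_nonneg {n : ℕ} (x : Euc n) : 0 ≤ gaussG x := le_of_lt (Real.exp_pos _)

lemma gaussG_continuous {n : ℕ} : Continuous (gaussG (n := n)) := by
  apply Real.continuous_exp.comp
  continuity

lemma usc_bdd {n : ℕ} (f : Euc n → ℝ) (hf : UpperSemicontinuous f) {K : Set (Euc n)}
    (hK : IsCompact K) : ∃ M : ℝ, ∀ x ∈ K, f x ≤ M := by
  have hopen : ∀ m : ℕ, IsOpen (f ⁻¹' Set.Iio (m : ℝ)) :=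
    fun m => (upperSemicontinuous_iff_isOpen_preimage.mp hf) m
  have hcover : K ⊆ ⋃ m : ℕ, f ⁻¹' Set.Iio (m : ℝ) := by
    intro x _
    obtain ⟨m, hm⟩ := exists_nat_gt (f x)
    exact Set.mem_iUnion.mpr ⟨m, hm⟩
  obtain ⟨t, ht⟩ := hK.elim_finite_subcover _ hopen hcover
  refine ⟨(t.sup id : ℕ), fun x hx => ?_⟩
  obtain ⟨m, hmt, hm⟩ : ∃ i ∈ t, f x < (i:ℝ) := by simpa using ht hx
  calc f x ≤ (m:ℝ) := le_of_lt hm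
    _ ≤ ((t.sup id : ℕ) : ℝ) := by exact_mod_cast Finset.le_sup (f := id) hmt

lemma expBound {n : ℕ} (f : Euc n → ℝ) (hf : IsLogConcave f) (y₀ : Euc n) (h₀ : 0 < f y₀) :
    ∃ Q : ℝ, 1 ≤ Q ∧ ∀ z, f z ≤ Q * Real.exp (Real.log Q * ‖z - y₀‖) := by
  obtain ⟨M, hM⟩ := usc_bdd f hf.2.2.1 (isCompact_closedBall y₀ 1)
  set c := min (f y₀) 1 with hc
  have hc0 : 0 < c := lt_min h₀ one_pos
  have hc1 : c ≤ 1 := min_le_right _ _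
  set M' := max M 1 with hM'
  have hM'1 : 1 ≤ M' := le_max_right _ _
  set Q := M' / c with hQ
  have hQ1 : 1 ≤ Q := by
    rw [hQ, le_div_iff₀ hc0]
    nlinarith
  have hL : 0 ≤ Real.log Q := Real.log_nonneg hQ1
  refine ⟨Q, hQ1, fun z => ?_⟩
  have hexp1 : 1 ≤ Real.exp (Real.log Q * ‖z - y₀‖) :=
    Real.one_le_exp (by positivity)
  by_cases h1 : ‖z - y₀‖ ≤ 1
  · have hz : z ∈ Metric.closedBall y₀ 1 := by
      simpa [Metric.mem_closedBall, dist_eq_norm] using h1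
    calc f z ≤ M := hM z hz
      _ ≤ Q := by rw [hQ, le_div_iff₀ hc0]; nlinarith [le_max_left M 1]
      _ ≤ Q * Real.exp (Real.log Q * ‖z - y₀‖) := by nlinarith
  · push_neg at h1
    have hnz : (0:ℝ) < ‖z - y₀‖ := lt_trans one_pos h1
    set t := ‖z - y₀‖⁻¹ with hts
    have ht0 : 0 < t := inv_pos.mpr hnz
    have ht1 : t ≤ 1 := by
      rw [hts, inv_le_one_iff₀]; right; exact le_of_lt h1
    have key := hf.2.2.2 y₀ z t (le_of_lt ht0) ht1
    have hmem : (1 - t) • y₀ + t • z ∈ Metric.closedBall y₀ 1 := by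
      have h2 : (1 - t) • y₀ + t • z - y₀ = t • (z - y₀) := by
        rw [smul_sub]; module
      simp only [Metric.mem_closedBall, dist_eq_norm, h2, norm_smul]
      rw [Real.norm_eq_abs, abs_of_pos ht0, hts]
      rw [inv_mul_cancel₀ (ne_of_gt hnz)]
    have hfm : f ((1 - t) • y₀ + t • z) ≤ M' := le_trans (hM _ hmem) (le_max_left _ _)
    have hy0pow : c ≤ f y₀ ^ (1 - t) := by
      rcases le_or_gt 1 (f y₀) with h | h
      · calc c ≤ 1 := hc1
          _ ≤ f y₀ ^ (1 - t) := Real.one_le_rpow h (by linarith)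
      · calc c ≤ f y₀ := min_le_left _ _
          _ = f y₀ ^ (1:ℝ) := (Real.rpow_one _).symm
          _ ≤ f y₀ ^ (1 - t) := Real.rpow_le_rpow_of_exponent_ge h₀ (le_of_lt h) (by linarith)
    have hpow : f z ^ t ≤ Q := by
      rw [hQ, le_div_iff₀ hc0]
      calc f z ^ t * c ≤ f z ^ t * f y₀ ^ (1-t) := by
            apply mul_le_mul_of_nonneg_left hy0pow (Real.rpow_nonneg (hf.1 z) t)
        _ = f y₀ ^ (1-t) * f z ^ t := mul_comm _ _
        _ ≤ f ((1 - t) • y₀ + t • z) := key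
        _ ≤ M' := hfm
    have hle : f z ≤ Q ^ (t⁻¹) := by
      have h1' : f z = (f z ^ t) ^ (t⁻¹) := by
        rw [← Real.rpow_mul (hf.1 z), mul_inv_cancel₀ (ne_of_gt ht0), Real.rpow_one]
      rw [h1']
      exact Real.rpow_le_rpow (Real.rpow_nonneg (hf.1 z) t) hpow (le_of_lt (inv_pos.mpr ht0))
    calc f z ≤ Q ^ (t⁻¹) := hle
      _ = Real.exp (Real.log Q * t⁻¹) := Real.rpow_def_of_pos (lt_of_lt_of_le one_pos hQ1) _
      _ = Real.exp (Real.log Q * ‖z - y₀‖) := by rw [hts, inv_inv]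
      _ ≤ Q * Real.exp (Real.log Q * ‖z - y₀‖) := by
          nlinarith [Real.exp_pos (Real.log Q * ‖z - y₀‖)]

lemma bddAbove_terms {n : ℕ} (f : Euc n → ℝ) (hfnn : ∀ z, 0 ≤ f z) {Q : ℝ} (hQ : 1 ≤ Q)
    {y₀ : Euc n} (hfQ : ∀ z, f z ≤ Q * Real.exp (Real.log Q * ‖z - y₀‖))
    {ε : ℝ} (hε : 0 < ε) (hε1 : ε ≤ 1) (x : Euc n) :
    BddAbove (Set.range fun y => gaussG y * homoth ε f (x - y)) := by
  set L := Real.log Q with hLdef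
  have hL : 0 ≤ L := Real.log_nonneg hQ
  have hQ0 : 0 < Q := lt_of_lt_of_le one_pos hQ
  refine ⟨Q * Real.exp (L * (‖x‖ + ‖y₀‖) + L^2/2), ?_⟩
  rintro _ ⟨y, rfl⟩
  simp only [homoth, gaussG]
  set w := ε⁻¹ • (x - y) with hw
  have hwb : ε * ‖w - y₀‖ ≤ ‖x‖ + ‖y‖ + ε * ‖y₀‖ := by
    have h1 : ‖w - y₀‖ ≤ ε⁻¹ * ‖x - y‖ + ‖y₀‖ := by
      calc ‖w - y₀‖ ≤ ‖w‖ + ‖y₀‖ := norm_sub_le _ _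
        _ = ε⁻¹ * ‖x - y‖ + ‖y₀‖ := by
            rw [hw, norm_smul, Real.norm_eq_abs, abs_of_pos (inv_pos.mpr hε)]
    calc ε * ‖w - y₀‖ ≤ ε * (ε⁻¹ * ‖x - y‖ + ‖y₀‖) := by
          exact mul_le_mul_of_nonneg_left h1 (le_of_lt hε)
      _ = ‖x - y‖ + ε * ‖y₀‖ := by field_simp
      _ ≤ ‖x‖ + ‖y‖ + ε * ‖y₀‖ := by
          have := norm_sub_le x y; linarith
  have hfw : f w ^ ε ≤ Q ^ ε * Real.exp (L * ‖w - y₀‖ * ε) := by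
    calc f w ^ ε ≤ (Q * Real.exp (L * ‖w - y₀‖)) ^ ε :=
          Real.rpow_le_rpow (hfnn w) (hfQ w) (le_of_lt hε)
      _ = Q ^ ε * (Real.exp (L * ‖w - y₀‖)) ^ ε :=
          Real.mul_rpow (le_of_lt hQ0) (le_of_lt (Real.exp_pos _))
      _ = Q ^ ε * Real.exp (L * ‖w - y₀‖ * ε) := by rw [← Real.exp_mul]
  have hQε : Q ^ ε ≤ Q := by
    calc Q ^ ε ≤ Q ^ (1:ℝ) := Real.rpow_le_rpow_of_exponent_le hQ hε1
      _ = Q := Real.rpow_one _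
  have hexp : Real.exp (L * ‖w - y₀‖ * ε) * Real.exp (-‖y‖^2/2)
      ≤ Real.exp (L * (‖x‖ + ‖y₀‖) + L^2/2) := by
    rw [← Real.exp_add]
    apply Real.exp_le_exp.mpr
    have h2 : L * (ε * ‖w - y₀‖) ≤ L * (‖x‖ + ‖y‖ + ε * ‖y₀‖) :=
      mul_le_mul_of_nonneg_left hwb hL
    have h3 : ε * ‖y₀‖ ≤ ‖y₀‖ := by nlinarith [norm_nonneg y₀]
    have h4 : L * ‖y‖ - ‖y‖^2/2 ≤ L^2/2 := by nlinarith [sq_nonneg (‖y‖ - L)]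
    have h5 : L * (ε * ‖y₀‖) ≤ L * ‖y₀‖ := mul_le_mul_of_nonneg_left h3 hL
    nlinarith
  calc Real.exp (-‖y‖^2/2) * f w ^ ε
      ≤ Real.exp (-‖y‖^2/2) * (Q ^ ε * Real.exp (L * ‖w - y₀‖ * ε)) := by
        apply mul_le_mul_of_nonneg_left hfw (le_of_lt (Real.exp_pos _))
    _ ≤ Q * Real.exp (L * (‖x‖ + ‖y₀‖) + L^2/2) := by
        have e1 : Real.exp (-‖y‖^2/2) * (Q ^ ε * Real.exp (L * ‖w - y₀‖ * ε))
            = Q ^ ε * (Real.exp (L * ‖w - y₀‖ * ε) * Real.exp (-‖y‖^2/2)) := by ring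
        rw [e1]
        apply mul_le_mul hQε hexp (by positivity) (le_of_lt hQ0)

lemma asplund_ge {n : ℕ} (f : Euc n → ℝ) {ε : ℝ} (hε : 0 < ε) (x z : Euc n)
    (hb : BddAbove (Set.range fun y => gaussG y * homoth ε f (x - y))) :
    gaussG (x - ε • z) * f z ^ ε ≤ asplund gaussG (homoth ε f) x := by
  have h := le_ciSup hb (x - ε • z)
  have e1 : x - (x - ε • z) = ε • z := by abel
  rw [e1] at h
  have e2 : homoth ε f (ε • z) = f z ^ ε := by
    rw [homoth, smul_smul, inv_mul_cancel₀ (ne_of_gt hε), one_smul]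
  rwa [e2] at h

lemma gaussInt_lt_top (n : ℕ) : gaussInt n < ⊤ := by
  have h := GaussianFourier.integrable_cexp_neg_mul_sq_norm_add (V := Euc n) (b := (1/2 : ℂ))
    (by norm_num) 0 0
  have h2 : Integrable (fun x : Euc n => gaussG x) := by
    have h3 := h.norm
    convert h3 using 2 with x
    rw [zero_mul, add_zero, Complex.norm_exp]
    have h4 : -(1/2 : ℂ) * (‖x‖:ℂ)^2 = ((-‖x‖^2/2 : ℝ) : ℂ) := by push_cast; ring
    rw [h4, Complex.ofReal_re, gaussG]
  have h5 := h2.hasFiniteIntegral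
  rwa [hasFiniteIntegral_iff_ofReal (Eventually.of_forall gaussG_nonneg)] at h5

lemma gaussInt_translate {n : ℕ} (v : Euc n) :
    ∫⁻ x : Euc n, ENNReal.ofReal (gaussG (x - v)) = gaussInt n :=
  lintegral_sub_right_eq_self (fun x => ENNReal.ofReal (gaussG x)) v

lemma setGauss_pos {n : ℕ} (c : Euc n) :
    0 < ∫⁻ x in Metric.closedBall c 1, ENNReal.ofReal (gaussG x) := by
  have hlb : ∀ x ∈ Metric.closedBall c 1,
      ENNReal.ofReal (Real.exp (-(‖c‖+1)^2/2)) ≤ ENNReal.ofReal (gaussG x) := by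
    intro x hx
    apply ENNReal.ofReal_le_ofReal
    rw [gaussG]
    apply Real.exp_le_exp.mpr
    have hxb : ‖x‖ ≤ ‖c‖ + 1 := by
      have := mem_closedBall_iff_norm.mp hx
      calc ‖x‖ = ‖c + (x - c)‖ := by rw [add_sub_cancel]
        _ ≤ ‖c‖ + ‖x - c‖ := norm_add_le _ _
        _ ≤ ‖c‖ + 1 := by linarith
    have h0 : (0:ℝ) ≤ ‖x‖ := norm_nonneg x
    nlinarith [norm_nonneg c]
  calc (0:ℝ≥0∞) < ENNReal.ofReal (Real.exp (-(‖c‖+1)^2/2)) * volume (Metric.closedBall c 1) := by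
        apply ENNReal.mul_pos
        · simp [Real.exp_pos]
        · exact ne_of_gt (Metric.measure_closedBall_pos volume c one_pos)
    _ = ∫⁻ _x in Metric.closedBall c 1, ENNReal.ofReal (Real.exp (-(‖c‖+1)^2/2)) := by
        rw [setLIntegral_const]
    _ ≤ ∫⁻ x in Metric.closedBall c 1, ENNReal.ofReal (gaussG x) :=
        setLIntegral_mono' measurableSet_closedBall hlb

lemma gaussInt_pos (n : ℕ) : 0 < gaussInt n :=
  lt_of_lt_of_le (setGauss_pos 0) (setLIntegral_le_lintegral _ _)


lemma ofReal_gaussG_measurable {n : ℕ} (v : Euc n) :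
    Measurable (fun x : Euc n => ENNReal.ofReal (gaussG (x - v))) :=
  ENNReal.measurable_ofReal.comp
    ((gaussG_continuous.comp (continuous_id.sub continuous_const)).measurable)

lemma branchI {n : ℕ} (f : Euc n → ℝ) (hfnn : ∀ z, 0 ≤ f z) {Q : ℝ} (hQ : 1 ≤ Q)
    {y₀ : Euc n} (hfQ : ∀ z, f z ≤ Q * Real.exp (Real.log Q * ‖z - y₀‖))
    (hunb : ∀ B : ℝ, ∃ z, B < f z) {ε : ℝ} (hε : 0 < ε) (hε1 : ε ≤ 1) :
    asplundIntegral n f ε = ⊤ := by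
  have hstep : ∀ j : ℕ, (j : ℝ≥0∞) * gaussInt n ≤ asplundIntegral n f ε := by
    intro j
    obtain ⟨z, hz⟩ := hunb (Real.exp ((j:ℝ)/ε))
    have hzε : (j:ℝ) ≤ f z ^ ε := by
      have h1 : Real.exp ((j:ℝ)/ε) ^ ε ≤ f z ^ ε :=
        Real.rpow_le_rpow (le_of_lt (Real.exp_pos _)) (le_of_lt hz) (le_of_lt hε)
      have h2 : Real.exp ((j:ℝ)/ε) ^ ε = Real.exp (j:ℝ) := by
        rw [← Real.exp_mul, div_mul_cancel₀ _ (ne_of_gt hε)]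
      have h3 : (j:ℝ) ≤ Real.exp (j:ℝ) := by
        have := Real.add_one_le_exp (j:ℝ); linarith
      calc (j:ℝ) ≤ Real.exp (j:ℝ) := h3
        _ = Real.exp ((j:ℝ)/ε) ^ ε := h2.symm
        _ ≤ f z ^ ε := h1
    calc (j:ℝ≥0∞) * gaussInt n = ENNReal.ofReal (j:ℝ) * gaussInt n := by
          rw [ENNReal.ofReal_natCast]
      _ ≤ ENNReal.ofReal (f z ^ ε) * gaussInt n :=
          mul_le_mul_left (ENNReal.ofReal_le_ofReal hzε) _
      _ = ENNReal.ofReal (f z ^ ε) * ∫⁻ x : Euc n, ENNReal.ofReal (gaussG (x - ε • z)) := by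
          rw [gaussInt_translate]
      _ = ∫⁻ x : Euc n, ENNReal.ofReal (f z ^ ε) * ENNReal.ofReal (gaussG (x - ε • z)) := by
          rw [lintegral_const_mul _ (ofReal_gaussG_measurable (ε • z))]
      _ = ∫⁻ x : Euc n, ENNReal.ofReal (gaussG (x - ε • z) * f z ^ ε) := by
          congr 1
          funext x
          rw [← ENNReal.ofReal_mul (Real.rpow_nonneg (hfnn z) ε), mul_comm]
      _ ≤ asplundIntegral n f ε := by
          apply lintegral_mono
          intro x
          apply ENNReal.ofReal_le_ofReal
          exact asplund_ge f hε x z (bddAbove_terms f hfnn hQ hfQ hε hε1 x)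
  rw [← top_le_iff]
  calc (⊤:ℝ≥0∞) = (⨆ j : ℕ, (j:ℝ≥0∞)) * gaussInt n := by
        rw [ENNReal.iSup_natCast, ENNReal.top_mul (ne_of_gt (gaussInt_pos n))]
    _ = ⨆ j : ℕ, (j:ℝ≥0∞) * gaussInt n := by
        rw [ENNReal.iSup_mul]
    _ ≤ asplundIntegral n f ε := iSup_le hstep


/-- Purely numerical core inequality. -/
lemma core_arith {ε θ N nw ixy ixk P lc lf C R m : ℝ}
    (hε : 0 < ε) (hε1 : ε ≤ 1) (hεsmall : ε * (16*(C+1)) ≤ 1)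
    (hθpos : 0 < θ) (hθ1 : θ ≤ 1) (hθN : ε * θ * N = 1/2)
    (hCdef : C = R * m + |lc| + m + m^2/2) (hm : 0 ≤ m) (hR : 0 ≤ R)
    (hixy : -(R * m) ≤ ixy) (hA : 0 ≤ ixk + lf) (hP : 1/2 ≤ P)
    (hnw : 0 ≤ nw) (hwn : ε * nw ≤ ε * m + 1/2) (hCnn : 0 ≤ C) :
    1/16 ≤ ε * ((1-θ) * ixy + θ * (ixk + N * P)) - ε^2*nw^2/2 + ((1-θ)*lc + θ*lf)*ε := by
  have hS : 0 ≤ R * m + |lc| := by positivity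
  have q1 : 0 ≤ ε * (1-θ) * (ixy + lc + (R * m + |lc|)) := by
    apply mul_nonneg (mul_nonneg (le_of_lt hε) (by linarith))
    have := neg_abs_le lc
    linarith
  have q2 : 0 ≤ ε * θ * (R * m + |lc|) :=
    mul_nonneg (mul_nonneg (le_of_lt hε) (le_of_lt hθpos)) hS
  have q3 : 0 ≤ ε * θ * (ixk + lf) :=
    mul_nonneg (mul_nonneg (le_of_lt hε) (le_of_lt hθpos)) hA
  have r1 : (1:ℝ)/4 ≤ ε * θ * (N * P) := by
    have h1 : ε * θ * (N * P) = (ε * θ * N) * P := by ring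
    rw [h1, hθN]
    linarith
  have q5 : (ε*nw)^2 ≤ (ε*m + 1/2)^2 := by
    apply pow_le_pow_left₀ (by positivity) hwn _
  have q6 : ε * ε * (m*m) ≤ ε * (m*m) := by
    have h8 : ε * ε ≤ ε := by nlinarith
    exact mul_le_mul_of_nonneg_right h8 (mul_nonneg hm hm)
  have q7 : ε * C ≤ 1/16 := by nlinarith [mul_nonneg (le_of_lt hε) hCnn]
  have q8 : 0 ≤ ε * m := mul_nonneg (le_of_lt hε) hm
  nlinarith [q1, q2, q3, r1, q5, q6, q7, q8]

set_option maxHeartbeats 4000000 in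
lemma branchII {n : ℕ} (f : Euc n → ℝ) (hf : IsLogConcave f)
    {y₀ : Euc n} (h₀ : 0 < f y₀) {Q : ℝ} (hQ1 : 1 ≤ Q)
    (hfQ : ∀ z, f z ≤ Q * Real.exp (Real.log Q * ‖z - y₀‖))
    (x₀ : Euc n) (y : ℕ → Euc n) (hy1 : ∀ k, 0 < f (y k))
    (hy2 : ∀ k : ℕ, (k:ℝ) ≤ inner ℝ x₀ (y k) + Real.log (f (y k)))
    {B : ℝ} (hB : ∀ z, f z ≤ B) :
    gaussInt n < Filter.liminf (fun ε : ℝ => asplundIntegral n f ε) (𝓝[>] (0:ℝ)) := by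
  have hinner : ∀ k : ℕ, (k:ℝ) - Real.log B ≤ inner ℝ x₀ (y k) := by
    intro k
    have hlog : Real.log (f (y k)) ≤ Real.log B := Real.log_le_log (hy1 k) (hB (y k))
    linarith [hy2 k]
  have hnorm : ∀ k : ℕ, (k:ℝ) - Real.log B ≤ ‖x₀‖ * ‖y k‖ := fun k =>
    le_trans (hinner k) (real_inner_le_norm _ _)
  have hx₀pos : 0 < ‖x₀‖ := by
    obtain ⟨k, hk⟩ := exists_nat_gt (Real.log B)
    have h1 : 0 < ‖x₀‖ * ‖y k‖ := lt_of_lt_of_le (by linarith) (hnorm k)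
    by_contra h
    push_neg at h
    have h2 : ‖x₀‖ = 0 := le_antisymm h (norm_nonneg _)
    rw [h2, zero_mul] at h1
    exact lt_irrefl _ h1
  -- shifted sequence with big norms
  set s₀ : ℕ := ⌈|Real.log B|⌉₊ + 1 with hs₀
  set Y : ℕ → Euc n := fun j => y (j + s₀) with hYdef
  have hYnorm : ∀ j : ℕ, (j:ℝ) + 1 ≤ ‖x₀‖ * ‖Y j‖ := by
    intro j
    have h1 := hnorm (j + s₀)
    have h2 : Real.log B ≤ |Real.log B| := le_abs_self _
    have h3 : |Real.log B| ≤ (⌈|Real.log B|⌉₊ : ℝ) := Nat.le_ceil _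
    have h4 : ((j + s₀ : ℕ) : ℝ) = (j:ℝ) + (⌈|Real.log B|⌉₊ : ℝ) + 1 := by
      rw [hs₀]; push_cast; ring
    rw [h4] at h1
    linarith
  have hYpos : ∀ j : ℕ, 0 < ‖Y j‖ := by
    intro j
    nlinarith [hYnorm j, norm_nonneg (Y j), Nat.cast_nonneg (α := ℝ) j]
  -- unit vectors and convergent subsequence
  set uu : ℕ → Euc n := fun j => ‖Y j‖⁻¹ • Y j with huu
  have huu_mem : ∀ j, uu j ∈ Metric.sphere (0 : Euc n) 1 := by
    intro j
    simp only [huu, Metric.mem_sphere, dist_zero_right, norm_smul, Real.norm_eq_abs,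
      abs_of_pos (inv_pos.mpr (hYpos j))]
    exact inv_mul_cancel₀ (ne_of_gt (hYpos j))
  obtain ⟨u, hu_mem, σ, hσmono, hσtend⟩ :=
    (isCompact_sphere (0 : Euc n) 1).tendsto_subseq huu_mem
  have hu_norm : ‖u‖ = 1 := by
    simpa [Metric.mem_sphere, dist_zero_right] using hu_mem
  -- the compact set K and constants
  set c : Euc n := x₀ + (2:ℝ) • u with hcdef
  set K : Set (Euc n) := Metric.closedBall c 1 with hKdef
  set R : ℝ := ‖x₀‖ + 3 with hRdef
  have hRpos : (0:ℝ) ≤ R := by rw [hRdef]; linarith [norm_nonneg x₀]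
  have hKfacts : ∀ x ∈ K, ‖x - x₀‖ ≤ 3 ∧ ‖x‖ ≤ R ∧ 1 ≤ (inner ℝ (x - x₀) u : ℝ) := by
    intro x hx
    have hd : ‖x - c‖ ≤ 1 := mem_closedBall_iff_norm.mp hx
    have h1 : x - x₀ = (x - c) + (2:ℝ) • u := by rw [hcdef]; abel
    have h2 : ‖x - x₀‖ ≤ 3 := by
      rw [h1]
      calc ‖(x - c) + (2:ℝ) • u‖ ≤ ‖x - c‖ + ‖(2:ℝ) • u‖ := norm_add_le _ _
        _ ≤ 1 + 2 := by
            rw [norm_smul, Real.norm_eq_abs, hu_norm]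
            have h9 : |(2:ℝ)| * 1 = 2 := by norm_num
            rw [h9]
            exact add_le_add_left hd 2
        _ = 3 := by norm_num
    refine ⟨h2, ?_, ?_⟩
    · calc ‖x‖ = ‖x₀ + (x - x₀)‖ := by rw [add_sub_cancel]
        _ ≤ ‖x₀‖ + ‖x - x₀‖ := norm_add_le _ _
        _ ≤ ‖x₀‖ + 3 := by linarith
    · have h3 : (inner ℝ (x - x₀) u : ℝ) = inner ℝ (x - c) u + 2 * ((‖u‖:ℝ)^2) := by
        rw [h1, inner_add_left, real_inner_smul_left, real_inner_self_eq_norm_sq]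
      have h4 : |(inner ℝ (x - c) u : ℝ)| ≤ ‖x - c‖ * ‖u‖ := abs_real_inner_le_norm _ _
      rw [hu_norm] at h4
      rw [h3, hu_norm]
      have h5 : -(1:ℝ) ≤ inner ℝ (x - c) u := by
        have := neg_abs_le ((inner ℝ (x - c) u : ℝ))
        nlinarith
      nlinarith
  set lc₀ : ℝ := Real.log (f y₀) with hlc₀
  set C : ℝ := R * ‖y₀‖ + |lc₀| + ‖y₀‖ + ‖y₀‖^2/2 with hCdef
  have hCnn : 0 ≤ C := by
    rw [hCdef]
    positivity
  set ε₁ : ℝ := min 1 (1/(16*(C+1))) with hε₁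
  have hε₁pos : 0 < ε₁ := by
    rw [hε₁]
    apply lt_min one_pos
    positivity
  -- the key pointwise estimate on K
  have hKbound : ∀ ε : ℝ, 0 < ε → ε < ε₁ → ∀ x ∈ K,
      Real.exp (1/16) * gaussG x ≤ asplund gaussG (homoth ε f) x := by
    intro ε hε hεlt x hxK
    have hε1 : ε ≤ 1 := le_of_lt (lt_of_lt_of_le hεlt (min_le_left _ _))
    have hεsmall : ε * (16*(C+1)) ≤ 1 := by
      have h1 : ε ≤ 1/(16*(C+1)) := le_of_lt (lt_of_lt_of_le hεlt (min_le_right _ _))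
      rw [le_div_iff₀ (by positivity)] at h1
      linarith
    obtain ⟨hx3, hxR, hxu⟩ := hKfacts x hxK
    -- choose the index j
    obtain ⟨J, hJ⟩ := (Metric.tendsto_atTop.mp hσtend) (1/6) (by norm_num)
    set j : ℕ := max J ⌈‖x₀‖/(2*ε)⌉₊ with hjdef
    set k : ℕ := σ j with hk
    have hdist : ‖uu k - u‖ ≤ 1/6 := by
      have := hJ j (le_max_left _ _)
      rw [dist_eq_norm] at this
      exact le_of_lt this
    set N : ℝ := ‖Y k‖ with hN
    have hNpos : 0 < N := hYpos k
    have hNbig : 1/(2*ε) ≤ N := by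
      have h1 : (j:ℝ) + 1 ≤ ‖x₀‖ * N := by
        have h2 := hYnorm k
        have h3 : (j:ℝ) ≤ (k:ℝ) := by exact_mod_cast hσmono.le_apply
        linarith
      have h4 : ‖x₀‖/(2*ε) ≤ (j:ℝ) + 1 := by
        have h5 : ‖x₀‖/(2*ε) ≤ (⌈‖x₀‖/(2*ε)⌉₊ : ℝ) := Nat.le_ceil _
        have h6 : (⌈‖x₀‖/(2*ε)⌉₊ : ℝ) ≤ (j:ℝ) := by
          exact_mod_cast Nat.cast_le.mpr (le_max_right J _)
        linarith
      have h7 : ‖x₀‖/(2*ε) ≤ ‖x₀‖ * N := le_trans h4 h1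
      rw [div_le_iff₀ (by positivity)] at h7
      rw [div_le_iff₀ (by positivity)]
      nlinarith
    set θ : ℝ := (2*ε*N)⁻¹ with hθdef
    have hθpos : 0 < θ := by rw [hθdef]; positivity
    have hθ1 : θ ≤ 1 := by
      rw [hθdef, inv_le_one_iff₀]
      right
      rw [div_le_iff₀ (by positivity)] at hNbig
      nlinarith
    have hθN : ε * θ * N = 1/2 := by
      rw [hθdef]
      field_simp
    set w : Euc n := (1-θ) • y₀ + θ • Y k with hwdef
    set lfk : ℝ := Real.log (f (Y k)) with hlfk
    have hfYk : 0 < f (Y k) := hy1 _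
    -- lower bound for f w
    have hfw : Real.exp ((1-θ)*lc₀ + θ*lfk) ≤ f w := by
      have h1 := hf.2.2.2 y₀ (Y k) θ (le_of_lt hθpos) hθ1
      have h2 : f y₀ ^ (1-θ) = Real.exp (lc₀ * (1-θ)) := by
        rw [Real.rpow_def_of_pos h₀, hlc₀]
      have h3 : f (Y k) ^ θ = Real.exp (lfk * θ) := by
        rw [Real.rpow_def_of_pos hfYk, hlfk]
      calc Real.exp ((1-θ)*lc₀ + θ*lfk) = Real.exp (lc₀*(1-θ)) * Real.exp (lfk*θ) := by
            rw [← Real.exp_add]; ring_nf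
        _ = f y₀ ^ (1-θ) * f (Y k) ^ θ := by rw [h2, h3]
        _ ≤ f w := h1
    -- inner ℝ product identities
    have hA : 0 ≤ (inner ℝ x₀ (Y k) : ℝ) + lfk := by
      have h1 := hy2 (k + s₀)
      have h2 : (0:ℝ) ≤ ((k + s₀ : ℕ):ℝ) := Nat.cast_nonneg _
      rw [hlfk, hYdef]
      linarith
    have hsub : (inner ℝ (x - x₀) (Y k) : ℝ) = N * (inner ℝ (x - x₀) (uu k) : ℝ) := by
      rw [huu]
      simp only [real_inner_smul_right, ← hN]
      field_simp
    have huk_half : 1/2 ≤ (inner ℝ (x - x₀) (uu k) : ℝ) := by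
      have h1 : (inner ℝ (x - x₀) (uu k) : ℝ)
          = inner ℝ (x - x₀) u + inner ℝ (x - x₀) (uu k - u) := by
        rw [← inner_add_right]
        congr 1
        abel
      have h2 : |(inner ℝ (x - x₀) (uu k - u) : ℝ)| ≤ ‖x - x₀‖ * ‖uu k - u‖ :=
        abs_real_inner_le_norm _ _
      have h3 : ‖x - x₀‖ * ‖uu k - u‖ ≤ 3 * (1/6) := by
        apply mul_le_mul hx3 hdist (norm_nonneg _) (by norm_num)
      have h4 := neg_abs_le ((inner ℝ (x - x₀) (uu k - u) : ℝ))
      rw [h1]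
      linarith
    have hw_inner : (inner ℝ x w : ℝ) = (1-θ) * inner ℝ x y₀ + θ * inner ℝ x (Y k) := by
      rw [hwdef, inner_add_right, real_inner_smul_right, real_inner_smul_right]
    have hYk_split : (inner ℝ x (Y k) : ℝ) = inner ℝ x₀ (Y k) + inner ℝ (x - x₀) (Y k) := by
      rw [← inner_add_left]
      congr 1
      abel
    -- norm of w
    have hwnorm : ε * ‖w‖ ≤ ε * ‖y₀‖ + 1/2 := by
      have h1 : ‖w‖ ≤ (1-θ) * ‖y₀‖ + θ * N := by
        rw [hwdef]
        calc ‖(1-θ) • y₀ + θ • Y k‖ ≤ ‖(1-θ) • y₀‖ + ‖θ • Y k‖ := norm_add_le _ _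
          _ = (1-θ) * ‖y₀‖ + θ * N := by
              rw [norm_smul, norm_smul, Real.norm_eq_abs, Real.norm_eq_abs,
                abs_of_nonneg (by linarith : (0:ℝ) ≤ 1-θ), abs_of_pos hθpos, hN]
      have h2 : ε * ((1-θ) * ‖y₀‖) ≤ ε * ‖y₀‖ := by nlinarith [norm_nonneg y₀]
      nlinarith
    -- the core inequality
    have hixy : -(R * ‖y₀‖) ≤ (inner ℝ x y₀ : ℝ) := by
      have hi : |(inner ℝ x y₀ : ℝ)| ≤ ‖x‖ * ‖y₀‖ := abs_real_inner_le_norm _ _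
      have := neg_abs_le ((inner ℝ x y₀ : ℝ))
      nlinarith [norm_nonneg y₀]
    have hcore : (1:ℝ)/16 ≤ ε * inner ℝ x w - ε^2*‖w‖^2/2 + ((1-θ)*lc₀ + θ*lfk)*ε := by
      rw [hw_inner, hYk_split, hsub]
      exact core_arith hε hε1 hεsmall hθpos hθ1 hθN hCdef (norm_nonneg y₀) hRpos
        hixy hA huk_half (norm_nonneg w) hwnorm hCnn
    -- conclude the pointwise bound
    have hball := asplund_ge f hε x w (bddAbove_terms f hf.1 hQ1 hfQ hε hε1 x)
    have hexpand : ‖x - ε • w‖^2 = ‖x‖^2 - 2*(ε * inner ℝ x w) + ε^2*‖w‖^2 := by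
      rw [norm_sub_sq_real, real_inner_smul_right, norm_smul, Real.norm_eq_abs,
        abs_of_pos hε, mul_pow]
    have hlow : Real.exp (1/16) * gaussG x ≤ gaussG (x - ε • w) * f w ^ ε := by
      have h1 : Real.exp ((1-θ)*lc₀ + θ*lfk) ^ ε ≤ f w ^ ε :=
        Real.rpow_le_rpow (le_of_lt (Real.exp_pos _)) hfw (le_of_lt hε)
      have h2 : Real.exp ((1-θ)*lc₀ + θ*lfk) ^ ε
          = Real.exp (((1-θ)*lc₀ + θ*lfk) * ε) := by
        rw [← Real.exp_mul]
      have h3 : Real.exp (1/16) * gaussG x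
          ≤ gaussG (x - ε • w) * Real.exp (((1-θ)*lc₀ + θ*lfk) * ε) := by
        simp only [gaussG]
        rw [← Real.exp_add, ← Real.exp_add]
        apply Real.exp_le_exp.mpr
        rw [hexpand]
        ring_nf
        ring_nf at hcore
        linarith
      calc Real.exp (1/16) * gaussG x
          ≤ gaussG (x - ε • w) * Real.exp (((1-θ)*lc₀ + θ*lfk) * ε) := h3
        _ = gaussG (x - ε • w) * Real.exp ((1-θ)*lc₀ + θ*lfk) ^ ε := by rw [h2]
        _ ≤ gaussG (x - ε • w) * f w ^ ε := by
            apply mul_le_mul_of_nonneg_left h1 (gaussG_nonneg _)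
    exact le_trans hlow hball
  -- the global pointwise bound
  have hGbound : ∀ ε : ℝ, 0 < ε → ε < ε₁ → ∀ x : Euc n,
      gaussG (x - ε • y₀) * (f y₀) ^ ε ≤ asplund gaussG (homoth ε f) x := by
    intro ε hε hεlt x
    exact asplund_ge f hε x y₀ (bddAbove_terms f hf.1 hQ1 hfQ hε
      (le_of_lt (lt_of_lt_of_le hεlt (min_le_left _ _))) x)
  -- integral quantities
  set T : ℝ≥0∞ := gaussInt n with hTdef
  set IK : ℝ≥0∞ := ∫⁻ x in K, ENNReal.ofReal (gaussG x) with hIKdef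
  have hIKpos : 0 < IK := setGauss_pos c
  have hIKle : IK ≤ T := setLIntegral_le_lintegral _ _
  have hTtop : T < ⊤ := gaussInt_lt_top n
  have hIKtop : IK ≠ ⊤ := ne_top_of_le_ne_top (ne_of_lt hTtop) hIKle
  have hKmeas : MeasurableSet K := measurableSet_closedBall
  have hmeasG : Measurable (fun x : Euc n => ENNReal.ofReal (gaussG x)) :=
    ENNReal.measurable_ofReal.comp gaussG_continuous.measurable
  -- lower bound for the integral
  set Φ : ℝ → ℝ≥0∞ := fun ε => ENNReal.ofReal (Real.exp (1/16)) * IK +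
      ENNReal.ofReal ((f y₀) ^ ε) *
        (T - ENNReal.ofReal (Real.exp (ε * (R * ‖y₀‖))) * IK) with hΦdef
  have hΦle : ∀ ε : ℝ, 0 < ε → ε < ε₁ → Φ ε ≤ asplundIntegral n f ε := by
    intro ε hε hεlt
    have hε1 : ε ≤ 1 := le_of_lt (lt_of_lt_of_le hεlt (min_le_left _ _))
    have hsplit : asplundIntegral n f ε
        = (∫⁻ x in K, ENNReal.ofReal (asplund gaussG (homoth ε f) x))
          + ∫⁻ x in Kᶜ, ENNReal.ofReal (asplund gaussG (homoth ε f) x) :=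
      (lintegral_add_compl _ hKmeas).symm
    have hKpart : ENNReal.ofReal (Real.exp (1/16)) * IK
        ≤ ∫⁻ x in K, ENNReal.ofReal (asplund gaussG (homoth ε f) x) := by
      calc ENNReal.ofReal (Real.exp (1/16)) * IK
          = ∫⁻ x in K, ENNReal.ofReal (Real.exp (1/16)) * ENNReal.ofReal (gaussG x) := by
            rw [hIKdef, lintegral_const_mul _ hmeasG]
        _ = ∫⁻ x in K, ENNReal.ofReal (Real.exp (1/16) * gaussG x) := by
            congr 1
            funext x
            rw [ENNReal.ofReal_mul (le_of_lt (Real.exp_pos _))]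
        _ ≤ ∫⁻ x in K, ENNReal.ofReal (asplund gaussG (homoth ε f) x) :=
            setLIntegral_mono' hKmeas (fun x hx =>
              ENNReal.ofReal_le_ofReal (hKbound ε hε hεlt x hx))
    have hJle : ∫⁻ x in K, ENNReal.ofReal (gaussG (x - ε • y₀))
        ≤ ENNReal.ofReal (Real.exp (ε * (R * ‖y₀‖))) * IK := by
      have hpt : ∀ x ∈ K, ENNReal.ofReal (gaussG (x - ε • y₀))
          ≤ ENNReal.ofReal (Real.exp (ε * (R * ‖y₀‖)) * gaussG x) := by
        intro x hx
        apply ENNReal.ofReal_le_ofReal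
        obtain ⟨_, hxR, _⟩ := hKfacts x hx
        have h1 : ‖x - ε • y₀‖^2 = ‖x‖^2 - 2*(ε * inner ℝ x y₀) + ε^2*‖y₀‖^2 := by
          rw [norm_sub_sq_real, real_inner_smul_right, norm_smul, Real.norm_eq_abs,
            abs_of_pos hε, mul_pow]
        have h2 : (inner ℝ x y₀ : ℝ) ≤ R * ‖y₀‖ := by
          have hi : |(inner ℝ x y₀ : ℝ)| ≤ ‖x‖ * ‖y₀‖ := abs_real_inner_le_norm _ _
          have := le_abs_self ((inner ℝ x y₀ : ℝ))
          nlinarith [norm_nonneg y₀]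
        simp only [gaussG]
        rw [← Real.exp_add]
        apply Real.exp_le_exp.mpr
        rw [h1]
        have h3 : ε * (inner ℝ x y₀ : ℝ) ≤ ε * (R * ‖y₀‖) :=
          mul_le_mul_of_nonneg_left h2 (le_of_lt hε)
        nlinarith [sq_nonneg (ε*‖y₀‖)]
      calc ∫⁻ x in K, ENNReal.ofReal (gaussG (x - ε • y₀))
          ≤ ∫⁻ x in K, ENNReal.ofReal (Real.exp (ε * (R * ‖y₀‖)) * gaussG x) :=
            setLIntegral_mono' hKmeas hpt
        _ = ∫⁻ x in K, ENNReal.ofReal (Real.exp (ε * (R * ‖y₀‖))) * ENNReal.ofReal (gaussG x) := by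
            congr 1
            funext x
            rw [ENNReal.ofReal_mul (le_of_lt (Real.exp_pos _))]
        _ = ENNReal.ofReal (Real.exp (ε * (R * ‖y₀‖))) * IK := by
            rw [hIKdef, lintegral_const_mul _ hmeasG]
    have hKc_tr : ∫⁻ x in Kᶜ, ENNReal.ofReal (gaussG (x - ε • y₀))
        = T - ∫⁻ x in K, ENNReal.ofReal (gaussG (x - ε • y₀)) := by
      have hadd := lintegral_add_compl (μ := volume)
        (fun x => ENNReal.ofReal (gaussG (x - ε • y₀))) hKmeas
      rw [gaussInt_translate (ε • y₀)] at hadd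
      apply ENNReal.eq_sub_of_add_eq
      · apply ne_top_of_le_ne_top (ne_of_lt hTtop)
        exact le_trans (setLIntegral_le_lintegral _ _)
          (le_of_eq (gaussInt_translate (ε • y₀)))
      · rw [add_comm]
        exact hadd
    have hKcpart : ENNReal.ofReal ((f y₀) ^ ε) *
        (T - ENNReal.ofReal (Real.exp (ε * (R * ‖y₀‖))) * IK)
        ≤ ∫⁻ x in Kᶜ, ENNReal.ofReal (asplund gaussG (homoth ε f) x) := by
      calc ENNReal.ofReal ((f y₀) ^ ε) *
            (T - ENNReal.ofReal (Real.exp (ε * (R * ‖y₀‖))) * IK)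
          ≤ ENNReal.ofReal ((f y₀) ^ ε) *
            (T - ∫⁻ x in K, ENNReal.ofReal (gaussG (x - ε • y₀))) :=
            mul_le_mul_right (tsub_le_tsub_left hJle T) _
        _ = ENNReal.ofReal ((f y₀) ^ ε) * ∫⁻ x in Kᶜ, ENNReal.ofReal (gaussG (x - ε • y₀)) := by
            rw [hKc_tr]
        _ = ∫⁻ x in Kᶜ, ENNReal.ofReal ((f y₀) ^ ε) * ENNReal.ofReal (gaussG (x - ε • y₀)) := by
            rw [lintegral_const_mul _ (ofReal_gaussG_measurable (ε • y₀))]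
        _ = ∫⁻ x in Kᶜ, ENNReal.ofReal (gaussG (x - ε • y₀) * (f y₀) ^ ε) := by
            congr 1
            funext x
            rw [← ENNReal.ofReal_mul (Real.rpow_nonneg (le_of_lt h₀) ε), mul_comm]
        _ ≤ ∫⁻ x in Kᶜ, ENNReal.ofReal (asplund gaussG (homoth ε f) x) :=
            setLIntegral_mono' hKmeas.compl (fun x _ =>
              ENNReal.ofReal_le_ofReal (hGbound ε hε hεlt x))
    rw [hsplit, hΦdef]
    exact add_le_add hKpart hKcpart
  -- limit of Φ
  have ht1 : Tendsto (fun ε : ℝ => ENNReal.ofReal ((f y₀) ^ ε)) (𝓝[>] (0:ℝ)) (𝓝 1) := by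
    have hreal : Tendsto (fun ε : ℝ => (f y₀) ^ ε) (𝓝[>] (0:ℝ)) (𝓝 1) := by
      have heq : (fun ε : ℝ => (f y₀) ^ ε) = fun ε : ℝ => Real.exp (Real.log (f y₀) * ε) := by
        funext ε
        exact Real.rpow_def_of_pos h₀ ε
      rw [heq]
      have h2 : Tendsto (fun ε : ℝ => Real.exp (Real.log (f y₀) * ε)) (𝓝 (0:ℝ))
          (𝓝 (Real.exp (Real.log (f y₀) * 0))) := by
        apply (Real.continuous_exp.comp (continuous_const.mul continuous_id)).tendsto
      rw [mul_zero, Real.exp_zero] at h2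
      exact h2.mono_left nhdsWithin_le_nhds
    have := (ENNReal.continuous_ofReal.tendsto 1).comp hreal
    rwa [ENNReal.ofReal_one] at this
  have ht2 : Tendsto (fun ε : ℝ => ENNReal.ofReal (Real.exp (ε * (R * ‖y₀‖))))
      (𝓝[>] (0:ℝ)) (𝓝 1) := by
    have hreal : Tendsto (fun ε : ℝ => Real.exp (ε * (R * ‖y₀‖))) (𝓝[>] (0:ℝ)) (𝓝 1) := by
      have h2 : Tendsto (fun ε : ℝ => Real.exp (ε * (R * ‖y₀‖))) (𝓝 (0:ℝ))
          (𝓝 (Real.exp (0 * (R * ‖y₀‖)))) := by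
        apply (Real.continuous_exp.comp (continuous_id.mul continuous_const)).tendsto
      rw [zero_mul, Real.exp_zero] at h2
      exact h2.mono_left nhdsWithin_le_nhds
    have := (ENNReal.continuous_ofReal.tendsto 1).comp hreal
    rwa [ENNReal.ofReal_one] at this
  have ht3 : Tendsto (fun ε : ℝ => ENNReal.ofReal (Real.exp (ε * (R * ‖y₀‖))) * IK)
      (𝓝[>] (0:ℝ)) (𝓝 IK) := by
    have := ENNReal.Tendsto.mul_const (b := IK) ht2 (Or.inl one_ne_zero)
    rwa [one_mul] at this
  have ht4 : Tendsto (fun ε : ℝ => T - ENNReal.ofReal (Real.exp (ε * (R * ‖y₀‖))) * IK)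
      (𝓝[>] (0:ℝ)) (𝓝 (T - IK)) :=
    ENNReal.Tendsto.sub tendsto_const_nhds ht3 (Or.inl (ne_of_lt hTtop))
  have ht5 : Tendsto (fun ε : ℝ => ENNReal.ofReal ((f y₀) ^ ε) *
      (T - ENNReal.ofReal (Real.exp (ε * (R * ‖y₀‖))) * IK)) (𝓝[>] (0:ℝ)) (𝓝 (T - IK)) := by
    have h5 := ENNReal.Tendsto.mul ht1 (Or.inl one_ne_zero) ht4
      (Or.inr ENNReal.one_ne_top)
    rwa [one_mul] at h5
  have ht6 : Tendsto Φ (𝓝[>] (0:ℝ))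
      (𝓝 (ENNReal.ofReal (Real.exp (1/16)) * IK + (T - IK))) := by
    rw [hΦdef]
    exact Tendsto.const_add _ ht5
  -- conclude
  have hev : ∀ᶠ ε in 𝓝[>] (0:ℝ), Φ ε ≤ asplundIntegral n f ε := by
    filter_upwards [Ioo_mem_nhdsGT_of_mem
      (by constructor <;> [exact le_refl (0:ℝ); exact hε₁pos] : (0:ℝ) ∈ Set.Ico (0:ℝ) ε₁)]
      with ε hε
    exact hΦle ε hε.1 hε.2
  have h7 := liminf_le_liminf hev
  rw [ht6.liminf_eq] at h7
  have h8 : (1:ℝ≥0∞) < ENNReal.ofReal (Real.exp (1/16)) := by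
    rw [← ENNReal.ofReal_one]
    apply (ENNReal.ofReal_lt_ofReal_iff (Real.exp_pos _)).mpr
    have := Real.add_one_le_exp ((1:ℝ)/16)
    linarith
  have hstrict : T < ENNReal.ofReal (Real.exp (1/16)) * IK + (T - IK) := by
    have h9 : IK < ENNReal.ofReal (Real.exp (1/16)) * IK := by
      conv_lhs => rw [← one_mul IK]
      exact ENNReal.mul_lt_mul_left (ne_of_gt hIKpos) hIKtop h8
    calc T = IK + (T - IK) := (add_tsub_cancel_of_le hIKle).symm
      _ < ENNReal.ofReal (Real.exp (1/16)) * IK + (T - IK) := by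
          apply ENNReal.add_lt_add_right _ h9
          exact ne_top_of_le_ne_top (ne_of_lt hTtop) tsub_le_self
  exact lt_of_lt_of_le hstrict h7


set_option maxHeartbeats 800000 in
/-- **Lemma.** If `f = e^{-φ}` is log-concave and `(Lφ)(x₀) = ∞` for some point `x₀`,
then `∫ G ⋆ (ε·f)` does not converge to `∫ G` as `ε → 0⁺`;
in fact `liminf_{ε→0⁺} ∫ G ⋆ (ε·f) > ∫ G`. -/
theorem asplundIntegral_not_tendsto_gaussInt_of_legendre_infinite
    (n : ℕ) (f : Euc n → ℝ) (φ : Euc n → EReal)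
    (hf : IsLogConcave f) (hφ : IsNegLogOf φ f)
    (hL : ∃ x₀, legendre φ x₀ = ⊤) :
    ¬ Tendsto (fun ε : ℝ => asplundIntegral n f ε) (𝓝[>] (0 : ℝ)) (𝓝 (gaussInt n)) ∧
      gaussInt n < Filter.liminf (fun ε : ℝ => asplundIntegral n f ε) (𝓝[>] (0 : ℝ)) := by
  obtain ⟨x₀, hx₀⟩ := hL
  obtain ⟨y₀, hy₀ne⟩ := hf.2.1
  have h₀ : 0 < f y₀ := lt_of_le_of_ne (hf.1 _) (Ne.symm hy₀ne)
  obtain ⟨Q, hQ1, hfQ⟩ := expBound f hf y₀ h₀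
  -- extraction of a maximizing sequence
  have hext : ∀ k : ℕ, ∃ z : Euc n, 0 < f z ∧ (k:ℝ) ≤ inner ℝ x₀ z + Real.log (f z) := by
    intro k
    have h := iSup_eq_top.mp hx₀ ((k:ℝ) : EReal) (EReal.coe_lt_top _)
    obtain ⟨z, hz⟩ := h
    have hfz : f z ≠ 0 := by
      intro h0
      rw [(hφ z).2 h0] at hz
      simp at hz
    have hfz' : 0 < f z := lt_of_le_of_ne (hf.1 z) (Ne.symm hfz)
    rw [(hφ z).1 hfz', ← EReal.coe_sub] at hz
    have h2 : (k:ℝ) < (inner ℝ x₀ z : ℝ) - (- Real.log (f z)) := by exact_mod_cast hz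
    exact ⟨z, hfz', by linarith⟩
  choose y hy1 hy2 using hext
  have key : gaussInt n <
      Filter.liminf (fun ε : ℝ => asplundIntegral n f ε) (𝓝[>] (0 : ℝ)) := by
    by_cases hunb : ∀ B : ℝ, ∃ z, B < f z
    · -- Branch I : f unbounded, all integrals are ⊤
      have htop : ∀ᶠ ε in 𝓝[>] (0:ℝ),
          (⊤:ℝ≥0∞) ≤ asplundIntegral n f ε := by
        filter_upwards [Ioo_mem_nhdsGT_of_mem (by norm_num : (0:ℝ) ∈ Set.Ico (0:ℝ) 1)]
          with ε hε
        exact le_of_eq (branchI f hf.1 hQ1 hfQ hunb hε.1 (le_of_lt hε.2)).symm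
      have h2 := liminf_le_liminf htop
      rw [liminf_const (⊤:ℝ≥0∞)] at h2
      exact lt_of_lt_of_le (gaussInt_lt_top n) h2
    · -- Branch II : f bounded
      push_neg at hunb
      obtain ⟨B, hB⟩ := hunb
      exact branchII f hf h₀ hQ1 hfQ x₀ y hy1 hy2 hB
  constructor
  · intro htend
    rw [htend.liminf_eq] at key
    exact lt_irrefl _ key
  · exact key


end
end

section
/- Let f = e^{-φ} be a log-concave function on ℝⁿ with (Lφ)(x) < ∞ for all x ∈ ℝⁿ, and let (f_k)_{k≥1} be a sequence of log-concave functions with f_1(x) ≤ f_2(x) ≤ f_3(x) ≤ ⋯ and f_k(x) → f(x) for every x. Then M*(f_k) → M*(f) as k → ∞. -/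
open MeasureTheory Filter Topology Real
open scoped ENNReal NNReal RealInnerProductSpace

noncomputable section

open scoped Pointwise

/-! ### Auxiliary lemmas -/

lemma erealToENNReal_coe (r : ℝ) : erealToENNReal (r : EReal) = ENNReal.ofReal r := by
  simp [erealToENNReal]

lemma erealToENNReal_mono : Monotone erealToENNReal := by
  intro x y h
  by_cases hy : y = ⊤
  · simp [erealToENNReal, hy]
  · have hx : x ≠ ⊤ := fun h' => hy (top_le_iff.mp (h' ▸ h))
    by_cases hb : x = ⊥
    · subst hb
      simp only [erealToENNReal, if_neg hx, if_neg hy, EReal.toReal_bot, ENNReal.ofReal_zero]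
      exact zero_le
    · simp only [erealToENNReal, if_neg hx, if_neg hy]
      exact ENNReal.ofReal_le_ofReal (EReal.toReal_le_toReal h hb hy)

lemma measurable_erealToENNReal : Measurable erealToENNReal := by
  have h : MeasurableSet {x : EReal | x = ⊤} := by
    have : {x : EReal | x = ⊤} = {⊤} := by ext x; simp
    rw [this]; exact measurableSet_singleton _
  exact Measurable.ite h measurable_const
    (ENNReal.measurable_ofReal.comp measurable_ereal_toReal)

lemma tendsto_erealToENNReal {u : ℕ → EReal} {a : EReal} (ha : a ≠ ⊤) (ha' : a ≠ ⊥)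
    (hu : ∀ k, u k ≠ ⊤) (h : Tendsto u atTop (𝓝 a)) :
    Tendsto (fun k => erealToENNReal (u k)) atTop (𝓝 (erealToENNReal a)) := by
  have h1 : Tendsto (fun k => ENNReal.ofReal ((u k).toReal)) atTop
      (𝓝 (ENNReal.ofReal a.toReal)) :=
    (ENNReal.continuous_ofReal.tendsto _).comp ((EReal.tendsto_toReal ha ha').comp h)
  have h2 : ∀ k, erealToENNReal (u k) = ENNReal.ofReal ((u k).toReal) := fun k => if_neg (hu k)
  rw [show erealToENNReal a = ENNReal.ofReal a.toReal from if_neg ha]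
  simpa only [← h2] using h1

lemma legendre_antitone {n : ℕ} {φ ψ : Euc n → EReal} (h : ∀ y, φ y ≤ ψ y) (x : Euc n) :
    legendre ψ x ≤ legendre φ x := by
  refine iSup_mono fun y => ?_
  rw [sub_eq_add_neg, sub_eq_add_neg]
  exact add_le_add_right (EReal.neg_le_neg_iff.mpr (h y)) _

lemma IsNegLogOf.ne_bot {n : ℕ} {φ : Euc n → EReal} {f : Euc n → ℝ}
    (hφ : IsNegLogOf φ f) (hf0 : ∀ x, 0 ≤ f x) (y : Euc n) : φ y ≠ ⊥ := by
  by_cases h0 : f y = 0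
  · rw [(hφ y).2 h0]; exact top_ne_bot
  · rw [(hφ y).1 (lt_of_le_of_ne (hf0 y) (Ne.symm h0))]
    exact EReal.coe_ne_bot _

lemma negLog_le_negLog {n : ℕ} {f g : Euc n → ℝ} {φ ψ : Euc n → EReal}
    (hf0 : ∀ x, 0 ≤ f x) (hφ : IsNegLogOf φ f) (hψ : IsNegLogOf ψ g)
    (hfg : ∀ x, f x ≤ g x) (x : Euc n) : ψ x ≤ φ x := by
  by_cases h0 : f x = 0
  · rw [(hφ x).2 h0]; exact le_top
  · have hfpos : 0 < f x := lt_of_le_of_ne (hf0 x) (Ne.symm h0)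
    have hgpos : 0 < g x := lt_of_lt_of_le hfpos (hfg x)
    rw [(hφ x).1 hfpos, (hψ x).1 hgpos, EReal.coe_le_coe_iff]
    exact neg_le_neg (Real.log_le_log hfpos (hfg x))

lemma legendre_measurable {n : ℕ} {φ : Euc n → EReal} (hbot : ∀ y, φ y ≠ ⊥) :
    Measurable (legendre φ) := by
  have hlsc : LowerSemicontinuous (legendre φ) := by
    apply lowerSemicontinuous_iSup
    intro y
    rcases eq_or_ne (φ y) ⊤ with h | h
    · have heq : (fun x : Euc n => ((inner ℝ x y : ℝ) : EReal) - φ y) = fun _ => (⊥ : EReal) := by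
        funext x; rw [h, EReal.sub_top]
      rw [heq]; exact lowerSemicontinuous_const
    · have hc : (((φ y).toReal : ℝ) : EReal) = φ y := EReal.coe_toReal h (hbot y)
      have hcont : Continuous fun x : Euc n => (((inner ℝ x y : ℝ) - (φ y).toReal : ℝ) : EReal) :=
        continuous_coe_real_ereal.comp ((continuous_id.inner continuous_const).sub continuous_const)
      have heq : (fun x : Euc n => ((inner ℝ x y : ℝ) : EReal) - φ y)
          = fun x : Euc n => (((inner ℝ x y : ℝ) - (φ y).toReal : ℝ) : EReal) := by
        funext x; rw [EReal.coe_sub, hc]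
      rw [heq]; exact hcont.lowerSemicontinuous
  exact hlsc.measurable

lemma legendre_term_le {n : ℕ} {ψ : Euc n → EReal} {g : Euc n → ℝ}
    (hψ : IsNegLogOf ψ g) (x y : Euc n) (hgy : 0 < g y) :
    ((inner ℝ x y + Real.log (g y) : ℝ) : EReal) ≤ legendre ψ x := by
  have heq : ((inner ℝ x y + Real.log (g y) : ℝ) : EReal) = ((inner ℝ x y : ℝ) : EReal) - ψ y := by
    rw [(hψ y).1 hgy, ← EReal.coe_sub, sub_neg_eq_add]
  rw [heq]
  exact le_iSup (fun y => ((inner ℝ x y : ℝ) : EReal) - ψ y) y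

/-- **Proposition (monotone convergence for `M*`).** If `f = e^{-φ}` is log-concave with
`Lφ < ∞` everywhere and `f_k` is a nondecreasing sequence of log-concave functions
converging pointwise to `f`, then `M*(f_k) → M*(f)`. -/
theorem meanWidth_tendsto_of_monotone
    (n : ℕ) (hn : 0 < n) (f : Euc n → ℝ) (φ : Euc n → EReal)
    (hf : IsLogConcave f) (hφ : IsNegLogOf φ f)
    (hL : ∀ x, legendre φ x < ⊤)
    (fs : ℕ → Euc n → ℝ) (φs : ℕ → Euc n → EReal)
    (hfs : ∀ k, IsLogConcave (fs k)) (hφs : ∀ k, IsNegLogOf (φs k) (fs k))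
    (hmono : ∀ k x, fs k x ≤ fs (k + 1) x)
    (hlim : ∀ x, Tendsto (fun k => fs k x) atTop (𝓝 (f x))) :
    Tendsto (fun k => meanWidth n (φs k)) atTop (𝓝 (meanWidth n φ)) := by
  classical
  obtain ⟨hf0, ⟨y₁, hy₁⟩, -, -⟩ := hf
  have hfs0 : ∀ k x, 0 ≤ fs k x := fun k => (hfs k).1
  have hmono' : ∀ x, Monotone fun k => fs k x := fun x =>
    monotone_nat_of_le_succ fun k => hmono k x
  have hfs_le_f : ∀ k x, fs k x ≤ f x := fun k x =>
    ge_of_tendsto (hlim x) (eventually_atTop.2 ⟨k, fun j hj => hmono' x hj⟩)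
  have hφbot : ∀ y, φ y ≠ ⊥ := hφ.ne_bot hf0
  have hφsbot : ∀ k y, φs k y ≠ ⊥ := fun k => (hφs k).ne_bot (hfs0 k)
  have hφ_le : ∀ k x, φ x ≤ φs k x := fun k =>
    negLog_le_negLog (hfs0 k) (hφs k) hφ (hfs_le_f k)
  have hφs_anti : ∀ k x, φs (k + 1) x ≤ φs k x := fun k =>
    negLog_le_negLog (hfs0 k) (hφs k) (hφs (k + 1)) (hmono k)
  set L : ℕ → Euc n → EReal := fun k => legendre (φs k) with hLdef
  have hLmono : ∀ x, Monotone fun k => L k x := fun x =>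
    monotone_nat_of_le_succ fun k => legendre_antitone (hφs_anti k) x
  have hLle : ∀ k x, L k x ≤ legendre φ x := fun k x => legendre_antitone (hφ_le k) x
  have hfy₁ : 0 < f y₁ := lt_of_le_of_ne (hf0 y₁) (Ne.symm hy₁)
  have hLφ_bot : ∀ x, legendre φ x ≠ ⊥ := fun x =>
    (lt_of_lt_of_le (EReal.bot_lt_coe _) (legendre_term_le hφ x y₁ hfy₁)).ne'
  have hLk_bot : ∀ k x, L k x ≠ ⊥ := by
    intro k x
    obtain ⟨z, hz⟩ := (hfs k).2.1
    exact (lt_of_lt_of_le (EReal.bot_lt_coe _)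
      (legendre_term_le (hφs k) x z (lt_of_le_of_ne (hfs0 k z) (Ne.symm hz)))).ne'
  have hLk_top : ∀ k x, L k x ≠ ⊤ := fun k x => (lt_of_le_of_lt (hLle k x) (hL x)).ne
  -- pointwise convergence of the Legendre transforms
  have hLtendsto : ∀ x, Tendsto (fun k => L k x) atTop (𝓝 (legendre φ x)) := by
    intro x
    have hsup : (⨆ k, L k x) = legendre φ x := by
      refine le_antisymm (iSup_le fun k => hLle k x) ?_
      refine iSup_le fun y => ?_
      by_cases h0 : f y = 0
      · rw [(hφ y).2 h0, EReal.sub_top]; exact bot_le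
      · have hfy : 0 < f y := lt_of_le_of_ne (hf0 y) (Ne.symm h0)
        have hev : ∀ᶠ k in atTop, 0 < fs k y := (hlim y).eventually (eventually_gt_nhds hfy)
        have htt : Tendsto (fun k => ((inner ℝ x y + Real.log (fs k y) : ℝ) : EReal)) atTop
            (𝓝 ((inner ℝ x y + Real.log (f y) : ℝ) : EReal)) := by
          refine EReal.tendsto_coe.mpr (tendsto_const_nhds.add ?_)
          exact (Real.continuousAt_log hfy.ne').tendsto.comp (hlim y)
        have heq : ((inner ℝ x y : ℝ) : EReal) - φ y
            = ((inner ℝ x y + Real.log (f y) : ℝ) : EReal) := by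
          rw [(hφ y).1 hfy, ← EReal.coe_sub, sub_neg_eq_add]
        rw [heq]
        refine le_of_tendsto htt ?_
        filter_upwards [hev] with k hk
        exact le_trans (legendre_term_le (hφs k) x y hk) (le_iSup (fun k => L k x) k)
    rw [← hsup]
    exact tendsto_atTop_iSup (hLmono x)
  -- positive and negative parts
  set γ : Measure (Euc n) := gaussianMeasure n with hγdef
  set P : ℕ → Euc n → ℝ≥0∞ := fun k x => erealToENNReal (L k x) with hPdef
  set Q : ℕ → Euc n → ℝ≥0∞ := fun k x => erealToENNReal (-L k x) with hQdef
  have hmeasL : ∀ k, Measurable (L k) := fun k => legendre_measurable (hφsbot k)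
  have hPmeas : ∀ k, Measurable (P k) := fun k => measurable_erealToENNReal.comp (hmeasL k)
  have hQmeas : ∀ k, Measurable (Q k) := fun k =>
    measurable_erealToENNReal.comp
      ((continuous_neg : Continuous fun x : EReal => -x).measurable.comp (hmeasL k))
  have hPt : ∀ x, Tendsto (fun k => P k x) atTop (𝓝 (erealToENNReal (legendre φ x))) := fun x =>
    tendsto_erealToENNReal (hL x).ne (hLφ_bot x) (fun k => hLk_top k x) (hLtendsto x)
  have hQt : ∀ x, Tendsto (fun k => Q k x) atTop
      (𝓝 (erealToENNReal (-legendre φ x))) := by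
    intro x
    refine tendsto_erealToENNReal ?_ ?_ (fun k => ?_) (hLtendsto x).neg
    · simp only [ne_eq, EReal.neg_eq_top_iff]; exact hLφ_bot x
    · simp only [ne_eq, EReal.neg_eq_bot_iff]; exact (hL x).ne
    · simp only [ne_eq, EReal.neg_eq_top_iff]; exact hLk_bot k x
  -- convergence of positive parts
  have hA : Tendsto (fun k => ∫⁻ x, P k x ∂γ) atTop
      (𝓝 (∫⁻ x, erealToENNReal (legendre φ x) ∂γ)) := by
    refine lintegral_tendsto_of_tendsto_of_monotone (fun k => (hPmeas k).aemeasurable)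
      (ae_of_all _ fun x => ?_) (ae_of_all _ hPt)
    exact fun i j hij => erealToENNReal_mono (hLmono x hij)
  -- dominating function for the negative parts
  obtain ⟨y₀, hy₀⟩ := (hfs 0).2.1
  have hfy₀ : 0 < fs 0 y₀ := lt_of_le_of_ne (hfs0 0 y₀) (Ne.symm hy₀)
  set c₀ : ℝ := -Real.log (fs 0 y₀) with hc₀def
  have hLlb : ∀ k x, ((inner ℝ x y₀ - c₀ : ℝ) : EReal) ≤ L k x := by
    intro k x
    have h1 : ((inner ℝ x y₀ - c₀ : ℝ) : EReal)
        = ((inner ℝ x y₀ + Real.log (fs 0 y₀) : ℝ) : EReal) := by rw [hc₀def]; ring_nf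
    calc ((inner ℝ x y₀ - c₀ : ℝ) : EReal)
        = ((inner ℝ x y₀ + Real.log (fs 0 y₀) : ℝ) : EReal) := h1
      _ ≤ L 0 x := legendre_term_le (hφs 0) x y₀ hfy₀
      _ ≤ L k x := hLmono x (Nat.zero_le k)
  set bound : Euc n → ℝ≥0∞ := fun x => ENNReal.ofReal (|c₀| + ‖y₀‖ * ‖x‖) with hbdef
  have hkey : ∀ (x : Euc n) (E : EReal), ((inner ℝ x y₀ - c₀ : ℝ) : EReal) ≤ E →
      erealToENNReal (-E) ≤ bound x := by
    intro x E hE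
    have h1 : -E ≤ ((c₀ - inner ℝ x y₀ : ℝ) : EReal) := by
      have : -E ≤ -(((inner ℝ x y₀ - c₀ : ℝ) : EReal)) := EReal.neg_le_neg_iff.mpr hE
      refine this.trans (le_of_eq ?_)
      rw [← EReal.coe_neg]; norm_num
    calc erealToENNReal (-E) ≤ erealToENNReal ((c₀ - inner ℝ x y₀ : ℝ) : EReal) :=
          erealToENNReal_mono h1
      _ = ENNReal.ofReal (c₀ - inner ℝ x y₀) := erealToENNReal_coe _
      _ ≤ bound x := by
          refine ENNReal.ofReal_le_ofReal ?_
          have h2 : |(inner ℝ x y₀ : ℝ)| ≤ ‖x‖ * ‖y₀‖ := abs_real_inner_le_norm x y₀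
          have h3 := le_abs_self c₀
          have h4 := neg_le_abs (inner ℝ x y₀ : ℝ)
          nlinarith [norm_nonneg x, norm_nonneg y₀]
  have hQ_le : ∀ k x, Q k x ≤ bound x := fun k x => hkey x (L k x) (hLlb k x)
  have hbound_meas : Measurable bound :=
    ENNReal.measurable_ofReal.comp (measurable_const.add (measurable_const.mul measurable_norm))
  -- finiteness of the integral of the dominating function
  have hbound_fin : (∫⁻ x, bound x ∂γ) ≠ ⊤ := by
    set C : ℝ := (2 * π) ^ (-(n : ℝ) / 2) with hCdef
    have hC : 0 < C := Real.rpow_pos_of_pos (by positivity) _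
    have hcont : Continuous fun x : Euc n => C * Real.exp (-‖x‖ ^ 2 / 2) :=
      continuous_const.mul (Real.continuous_exp.comp ((continuous_norm.pow 2).neg.div_const 2))
    have hγ : γ = volume.withDensity fun x : Euc n =>
        ENNReal.ofReal (C * Real.exp (-‖x‖ ^ 2 / 2)) := rfl
    rw [hγ, lintegral_withDensity_eq_lintegral_mul _ hcont.measurable.ennreal_ofReal hbound_meas]
    set M : ℝ := C * (|c₀| + ‖y₀‖) with hMdef
    have hpt : ∀ x : Euc n,
        (ENNReal.ofReal (C * Real.exp (-‖x‖ ^ 2 / 2)) * bound x)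
          ≤ ENNReal.ofReal (M * Real.exp (-(1 / 4) * ‖x‖ ^ 2)) := by
      intro x
      rw [hbdef, ← ENNReal.ofReal_mul (by positivity)]
      refine ENNReal.ofReal_le_ofReal ?_
      set t : ℝ := ‖x‖ with htdef
      have ht : 0 ≤ t := norm_nonneg x
      have e1 : 1 + t ^ 2 / 4 ≤ Real.exp (t ^ 2 / 4) := by
        have := Real.add_one_le_exp (t ^ 2 / 4); linarith
      have e2 : t ≤ 1 + t ^ 2 / 4 := by nlinarith [sq_nonneg (t - 2)]
      have h1 : |c₀| + ‖y₀‖ * t ≤ (|c₀| + ‖y₀‖) * Real.exp (t ^ 2 / 4) := by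
        have h5 : |c₀| + ‖y₀‖ * t ≤ (|c₀| + ‖y₀‖) * (1 + t ^ 2 / 4) := by
          nlinarith [abs_nonneg c₀, norm_nonneg y₀]
        exact h5.trans (mul_le_mul_of_nonneg_left e1 (by positivity))
      have h6 : C * Real.exp (-t ^ 2 / 2) * (|c₀| + ‖y₀‖ * t)
          ≤ C * Real.exp (-t ^ 2 / 2) * ((|c₀| + ‖y₀‖) * Real.exp (t ^ 2 / 4)) :=
        mul_le_mul_of_nonneg_left h1 (by positivity)
      refine h6.trans (le_of_eq ?_)
      rw [hMdef]
      rw [show C * Real.exp (-t ^ 2 / 2) * ((|c₀| + ‖y₀‖) * Real.exp (t ^ 2 / 4))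
          = C * (|c₀| + ‖y₀‖) * (Real.exp (-t ^ 2 / 2) * Real.exp (t ^ 2 / 4)) by ring,
        ← Real.exp_add]
      ring_nf
    have hint : Integrable (fun x : Euc n => M * Real.exp (-(1 / 4) * ‖x‖ ^ 2)) := by
      refine Integrable.const_mul ?_ M
      have h0 : Integrable (fun v : Euc n =>
          Complex.exp (-(((1 / 4 : ℝ) : ℂ)) * (‖v‖ : ℂ) ^ 2 + 0 * ((inner ℝ (0 : Euc n) v : ℝ) : ℂ))) :=
        GaussianFourier.integrable_cexp_neg_mul_sq_norm_add (by norm_num) 0 0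
      have := h0.norm
      refine this.congr (Eventually.of_forall fun v => ?_)
      show ‖Complex.exp (-(((1 / 4 : ℝ)) : ℂ) * (‖v‖ : ℂ) ^ 2
          + 0 * ((inner ℝ (0 : Euc n) v : ℝ) : ℂ))‖ = rexp (-(1 / 4) * ‖v‖ ^ 2)
      have hz : (-(((1 / 4 : ℝ)) : ℂ) * (‖v‖ : ℂ) ^ 2 + 0 * ((inner ℝ (0 : Euc n) v : ℝ) : ℂ))
          = ((-(1 / 4) * ‖v‖ ^ 2 : ℝ) : ℂ) := by push_cast; ring
      rw [hz, Complex.norm_exp_ofReal]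
    refine ne_of_lt ?_
    calc (∫⁻ x : Euc n, ((fun x : Euc n => ENNReal.ofReal (C * Real.exp (-‖x‖ ^ 2 / 2))) * bound) x)
        ≤ ∫⁻ x : Euc n, ENNReal.ofReal (M * Real.exp (-(1 / 4) * ‖x‖ ^ 2)) :=
          lintegral_mono fun x => hpt x
      _ < ⊤ := hint.lintegral_lt_top
  -- convergence of negative parts
  have hB : Tendsto (fun k => ∫⁻ x, Q k x ∂γ) atTop
      (𝓝 (∫⁻ x, erealToENNReal (-legendre φ x) ∂γ)) :=
    tendsto_lintegral_of_dominated_convergence bound hQmeas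
      (fun k => ae_of_all _ (hQ_le k)) hbound_fin (ae_of_all _ hQt)
  have hBfin : (∫⁻ x, erealToENNReal (-legendre φ x) ∂γ) ≠ ⊤ := by
    refine ne_top_of_le_ne_top hbound_fin (lintegral_mono fun x => ?_)
    exact hkey x (legendre φ x) ((hLlb 0 x).trans (hLle 0 x))
  -- assembling: convergence of the EReal integrals
  have hsub : Tendsto (fun k => eIntegral γ (L k)) atTop (𝓝 (eIntegral γ (legendre φ))) := by
    have h1 : Tendsto (fun k => ((∫⁻ x, P k x ∂γ : ℝ≥0∞) : EReal)) atTop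
        (𝓝 ((∫⁻ x, erealToENNReal (legendre φ x) ∂γ : ℝ≥0∞) : EReal)) :=
      (continuous_coe_ennreal_ereal.tendsto _).comp hA
    have h2 : Tendsto (fun k => (-((∫⁻ x, Q k x ∂γ : ℝ≥0∞) : EReal))) atTop
        (𝓝 (-((∫⁻ x, erealToENNReal (-legendre φ x) ∂γ : ℝ≥0∞) : EReal))) :=
      ((continuous_coe_ennreal_ereal.tendsto _).comp hB).neg
    have hne : (-((∫⁻ x, erealToENNReal (-legendre φ x) ∂γ : ℝ≥0∞) : EReal)) ≠ ⊥ := by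
      simp only [ne_eq, EReal.neg_eq_bot_iff, EReal.coe_ennreal_eq_top_iff]
      exact hBfin
    have hcont : ContinuousAt (fun p : EReal × EReal => p.1 + p.2)
        (((∫⁻ x, erealToENNReal (legendre φ x) ∂γ : ℝ≥0∞) : EReal),
          -((∫⁻ x, erealToENNReal (-legendre φ x) ∂γ : ℝ≥0∞) : EReal)) :=
      EReal.continuousAt_add (Or.inr hne) (Or.inl (EReal.coe_ennreal_ne_bot _))
    have hfinal := hcont.tendsto.comp (h1.prodMk_nhds h2)
    simp only [eIntegral, sub_eq_add_neg]
    exact hfinal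
  -- multiplying by the constant 2/n
  have hcoef : ((2 / n : ℝ) : EReal) ≠ 0 := by
    rw [ne_eq, EReal.coe_eq_zero]
    positivity
  have hcont2 : ContinuousAt (fun p : EReal × EReal => p.1 * p.2)
      (((2 / n : ℝ) : EReal), eIntegral γ (legendre φ)) :=
    EReal.continuousAt_mul (Or.inl hcoef) (Or.inl hcoef)
      (Or.inl (EReal.coe_ne_bot _)) (Or.inl (EReal.coe_ne_top _))
  have hfinal := hcont2.tendsto.comp (tendsto_const_nhds.prodMk_nhds hsub)
  simp only [meanWidth]
  exact hfinal

end
end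

section
/- Let f: ℝⁿ → [0,∞) be log-concave with f(0) ≥ 1, and for β > 0 let K_{f,β} = { x ∈ ℝⁿ : f(x) ≥ e^{−βn} }. Then for every β > 0 the Lebesgue measure satisfies |K_{f,β}| ≤ (e · max(1,β))ⁿ · ∫_{ℝⁿ} f(x) dx; in particular |K_{f,1}| · e^{−n} ≤ ∫_{ℝⁿ} f. -/
open MeasureTheory Filter Topology Real
open scoped ENNReal NNReal RealInnerProductSpace

noncomputable section

open scoped Pointwise

/-- For log-concave `f` with `f(0) ≥ 1` and `β > 0`, the superlevel set
`K_{f,β} = {x : f(x) ≥ e^{-βn}}` satisfies `|K_{f,β}| ≤ (e max(1,β))ⁿ ∫ f`;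
in particular `|K_{f,1}| e^{-n} ≤ ∫ f`. -/
theorem volume_superlevel_set_le
    (n : ℕ) (f : Euc n → ℝ) (hf : IsLogConcave f) (h0 : 1 ≤ f 0)
    (β : ℝ) (hβ : 0 < β) :
    volume {x : Euc n | Real.exp (-(β * n)) ≤ f x} ≤
        ENNReal.ofReal ((Real.exp 1 * max 1 β) ^ n) *
          ∫⁻ x : Euc n, ENNReal.ofReal (f x) ∧
      volume {x : Euc n | Real.exp (-((n : ℝ))) ≤ f x} * ENNReal.ofReal (Real.exp (-(n : ℝ))) ≤
        ∫⁻ x : Euc n, ENNReal.ofReal (f x) := by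
  obtain ⟨hf0, -, husc, hlc⟩ := hf
  -- superlevel sets are closed
  have hclosed : ∀ c : ℝ, IsClosed {x : Euc n | c ≤ f x} := by
    intro c
    have : {x : Euc n | c ≤ f x} = (f ⁻¹' Set.Iio c)ᶜ := by
      ext x; simp [not_lt]
    rw [this]
    exact (husc.isOpen_preimage c).isClosed_compl
  -- key lemma: lower bound on the integral from a set where f ≥ c
  have key : ∀ (s : Set (Euc n)) (c : ℝ), MeasurableSet s → (∀ x ∈ s, c ≤ f x) →
      ENNReal.ofReal c * volume s ≤ ∫⁻ x : Euc n, ENNReal.ofReal (f x) := by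
    intro s c hs hc
    calc ENNReal.ofReal c * volume s = ∫⁻ _ in s, ENNReal.ofReal c := by
          rw [setLIntegral_const, mul_comm]
      _ ≤ ∫⁻ x in s, ENNReal.ofReal (f x) :=
          setLIntegral_mono' hs fun x hx => ENNReal.ofReal_le_ofReal (hc x hx)
      _ ≤ ∫⁻ x : Euc n, ENNReal.ofReal (f x) := setLIntegral_le_lintegral s _
  constructor
  · -- first part
    set m : ℝ := max 1 β with hm_def
    have hm1 : (1 : ℝ) ≤ m := le_max_left _ _
    have hm0 : (0 : ℝ) < m := lt_of_lt_of_le one_pos hm1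
    set t : ℝ := m⁻¹ with ht_def
    have ht0 : (0 : ℝ) < t := inv_pos.mpr hm0
    have ht1 : t ≤ 1 := inv_le_one_of_one_le₀ hm1
    set K : Set (Euc n) := {x : Euc n | Real.exp (-(β * n)) ≤ f x} with hK_def
    have hKm : MeasurableSet K := (hclosed _).measurableSet
    have htKm : MeasurableSet (t • K) :=
      ((hclosed _).smul_of_ne_zero (ne_of_gt ht0)).measurableSet
    -- f ≥ exp(-n) on t • K
    have hbound : ∀ x ∈ t • K, Real.exp (-(n : ℝ)) ≤ f x := by
      rintro x ⟨y, hy, rfl⟩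
      have hxy := hlc 0 y t ht0.le ht1
      rw [smul_zero, zero_add] at hxy
      have h1 : (1 : ℝ) ≤ f 0 ^ (1 - t) := by
        calc (1 : ℝ) = 1 ^ (1 - t) := (Real.one_rpow _).symm
          _ ≤ f 0 ^ (1 - t) := Real.rpow_le_rpow zero_le_one h0 (by linarith)
      have h2 : Real.exp (-(n : ℝ)) ≤ f y ^ t := by
        have hβt : β * t ≤ 1 := by
          rw [ht_def]
          rw [mul_inv_le_iff₀ hm0, one_mul]
          exact le_max_right _ _
        calc Real.exp (-(n : ℝ)) ≤ Real.exp (-(β * n) * t) := by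
              apply Real.exp_le_exp.mpr
              have : β * (n : ℝ) * t = (n : ℝ) * (β * t) := by ring
              nlinarith [Nat.cast_nonneg (α := ℝ) n]
          _ = Real.exp (-(β * n)) ^ t := Real.exp_mul _ t
          _ ≤ f y ^ t := Real.rpow_le_rpow (Real.exp_pos _).le hy ht0.le
      calc Real.exp (-(n : ℝ)) = 1 * Real.exp (-(n : ℝ)) := (one_mul _).symm
        _ ≤ f 0 ^ (1 - t) * f y ^ t := by
            apply mul_le_mul h1 h2 (Real.exp_pos _).le
            exact le_trans zero_le_one h1
        _ ≤ f (t • y) := hxy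
    have hkey := key (t • K) (Real.exp (-(n : ℝ))) htKm hbound
    have hvol : volume (t • K) = ENNReal.ofReal (t ^ n) * volume K := by
      rw [Measure.addHaar_smul_of_nonneg volume ht0.le K, finrank_euclideanSpace_fin]
    rw [hvol, ← mul_assoc, ← ENNReal.ofReal_mul (Real.exp_pos _).le] at hkey
    -- (e*m)^n * (exp(-n) * t^n) = 1
    have hprod : (Real.exp 1 * m) ^ n * (Real.exp (-(n : ℝ)) * t ^ n) = 1 := by
      have he : Real.exp (-(n : ℝ)) = (Real.exp 1)⁻¹ ^ n := by
        rw [show (-(n : ℝ)) = (n : ℝ) * (-1) by ring, Real.exp_nat_mul, Real.exp_neg]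
      have h1 : Real.exp 1 * m * ((Real.exp 1)⁻¹ * m⁻¹) = 1 := by
        field_simp
      calc (Real.exp 1 * m) ^ n * (Real.exp (-(n : ℝ)) * t ^ n)
          = (Real.exp 1 * m * ((Real.exp 1)⁻¹ * m⁻¹)) ^ n := by
            rw [he, ht_def]; ring
        _ = 1 := by rw [h1, one_pow]
    have hone : ENNReal.ofReal ((Real.exp 1 * m) ^ n) *
        ENNReal.ofReal (Real.exp (-(n : ℝ)) * t ^ n) = 1 := by
      rw [← ENNReal.ofReal_mul (by positivity), hprod, ENNReal.ofReal_one]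
    calc volume K = 1 * volume K := (one_mul _).symm
      _ = ENNReal.ofReal ((Real.exp 1 * m) ^ n) *
            (ENNReal.ofReal (Real.exp (-(n : ℝ)) * t ^ n) * volume K) := by
          rw [← mul_assoc, hone]
      _ ≤ ENNReal.ofReal ((Real.exp 1 * m) ^ n) * ∫⁻ x : Euc n, ENNReal.ofReal (f x) :=
          mul_le_mul_right hkey _
  · -- second part
    rw [mul_comm]
    exact key _ _ (hclosed _).measurableSet fun x hx => hx

end
end
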